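/- arXiv:2004.11234 — 9 statements merged into one kernel-verified Lean document; each statement's English description precedes it below -/
import Mathlib

section
/- Let D_N be a compact subset of ℝ^N and let F : D_N × D_d → D_N be a continuous state map which is a contraction in its first argument with constant 0 < c < 1, i.e. ‖F(x₁,z) − F(x₂,z)‖ ≤ c‖x₁ − x₂‖ for all x₁, x₂ ∈ D_N and z ∈ D_d. Then the associated state system has the echo state property for any input in (D_d)^{ℤ₋}: for every z ∈ (D_d)^{ℤ₋} there exists a unique x ∈ (D_N)^{ℤ₋} with x_t = F(x_{t−1}, z_t) for all t ∈ ℤ₋. Moreover, the resulting state filter U^F : (D_d)^{ℤ₋} → (D_N)^{ℤ₋} is continuous with respect to the product topologies on (D_d)^{ℤ₋} and (D_N)^{ℤ₋}. -/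
/-- Iterated approximations: `approx a F k z n` is the result of applying the
recurrence `k` times starting from the constant `a`. -/
noncomputable def approxSeq {N d : ℕ} {DN : Set (EuclideanSpace ℝ (Fin N))}
    {Dd : Set (EuclideanSpace ℝ (Fin d))} (a : DN) (F : DN → Dd → DN) :
    ℕ → (ℕ → Dd) → ℕ → DN
  | 0, _, _ => a
  | (k+1), z, n => F (approxSeq a F k z (n+1)) (z n)

/- STATEMENT 0: echo state property and continuity of the state filter for a
   continuous state map on a compact state space which is a contraction in the
   state variable.  ℤ₋ (nonpositive integers) is encoded by ℕ via n ↦ -n; the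
   recurrence x_t = F(x_{t-1}, z_t), t ∈ ℤ₋, becomes x n = F (x (n+1)) (z n).
   The spaces (D_d)^{ℤ₋} and (D_N)^{ℤ₋} carry the product topologies. -/
theorem stmt_0 {N d : ℕ}
    (DN : Set (EuclideanSpace ℝ (Fin N))) (Dd : Set (EuclideanSpace ℝ (Fin d)))
    (hDNcompact : IsCompact DN) (hDNne : DN.Nonempty)
    (F : DN → Dd → DN)
    (hFcont : Continuous fun p : DN × Dd => F p.1 p.2)
    (c : ℝ) (hc0 : 0 < c) (hc1 : c < 1)
    (hcontr : ∀ (x₁ x₂ : DN) (z : Dd),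
      ‖((F x₁ z : EuclideanSpace ℝ (Fin N)) - (F x₂ z : EuclideanSpace ℝ (Fin N)))‖ ≤
        c * ‖((x₁ : EuclideanSpace ℝ (Fin N)) - (x₂ : EuclideanSpace ℝ (Fin N)))‖) :
    ∃ U : (ℕ → Dd) → (ℕ → DN),
      Continuous U ∧
      ∀ z : ℕ → Dd,
        (∀ n, U z n = F (U z (n + 1)) (z n)) ∧
        (∀ x : ℕ → DN, (∀ n, x n = F (x (n + 1)) (z n)) → x = U z) := by
  haveI : CompactSpace DN := isCompact_iff_compactSpace.mp hDNcompact
  obtain ⟨a, ha⟩ := hDNne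
  set A : DN := ⟨a, ha⟩
  set C : ℝ := Metric.diam DN with hC
  have hC0 : 0 ≤ C := Metric.diam_nonneg
  have hdistC : ∀ x y : DN, dist x y ≤ C := by
    intro x y
    rw [Subtype.dist_eq]
    exact Metric.dist_le_diam_of_mem hDNcompact.isBounded x.2 y.2
  have hFd : ∀ (x₁ x₂ : DN) (z : Dd), dist (F x₁ z) (F x₂ z) ≤ c * dist x₁ x₂ := by
    intro x₁ x₂ z
    rw [Subtype.dist_eq, Subtype.dist_eq, dist_eq_norm, dist_eq_norm]
    exact hcontr x₁ x₂ z
  -- continuity of F in the first variable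
  have hF1 : ∀ w : Dd, Continuous fun x : DN => F x w := fun w =>
    hFcont.comp (continuous_id.prodMk continuous_const)
  -- key geometric estimate
  have key : ∀ (k : ℕ) (z : ℕ → Dd) (n : ℕ),
      dist (approxSeq A F k z n) (approxSeq A F (k+1) z n) ≤ C * c ^ k := by
    intro k
    induction k with
    | zero => intro z n; simpa using hdistC _ _
    | succ k ih =>
      intro z n
      have h1 : dist (approxSeq A F (k+1) z n) (approxSeq A F (k+2) z n)
          ≤ c * dist (approxSeq A F k z (n+1)) (approxSeq A F (k+1) z (n+1)) := by
        simpa [approxSeq] using hFd (approxSeq A F k z (n+1)) (approxSeq A F (k+1) z (n+1)) (z n)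
      calc dist (approxSeq A F (k+1) z n) (approxSeq A F (k+2) z n)
          ≤ c * dist (approxSeq A F k z (n+1)) (approxSeq A F (k+1) z (n+1)) := h1
        _ ≤ c * (C * c ^ k) := by
            exact mul_le_mul_of_nonneg_left (ih z (n+1)) hc0.le
        _ = C * c ^ (k+1) := by ring
  have hcauchy : ∀ (z : ℕ → Dd) (n : ℕ), CauchySeq (fun k => approxSeq A F k z n) := by
    intro z n
    exact cauchySeq_of_le_geometric c C hc1 (fun k => key k z n)
  have hlim : ∀ (z : ℕ → Dd) (n : ℕ), ∃ x : DN,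
      Filter.Tendsto (fun k => approxSeq A F k z n) Filter.atTop (nhds x) :=
    fun z n => cauchySeq_tendsto_of_complete (hcauchy z n)
  set U : (ℕ → Dd) → ℕ → DN := fun z n => (hlim z n).choose with hUdef
  have hU : ∀ (z : ℕ → Dd) (n : ℕ),
      Filter.Tendsto (fun k => approxSeq A F k z n) Filter.atTop (nhds (U z n)) :=
    fun z n => (hlim z n).choose_spec
  -- the recurrence for U
  have hrec : ∀ (z : ℕ → Dd) (n : ℕ), U z n = F (U z (n+1)) (z n) := by
    intro z n
    have h1 : Filter.Tendsto (fun k => approxSeq A F (k+1) z n) Filter.atTop (nhds (U z n)) :=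
      (hU z n).comp (Filter.tendsto_add_atTop_nat 1)
    have h2 : Filter.Tendsto (fun k => approxSeq A F (k+1) z n) Filter.atTop
        (nhds (F (U z (n+1)) (z n))) := by
      have := ((hF1 (z n)).tendsto (U z (n+1))).comp (hU z (n+1))
      simpa [approxSeq, Function.comp_def] using this
    exact tendsto_nhds_unique h1 h2
  -- uniform distance bound from the approximations to the limit
  have hdistU : ∀ (z : ℕ → Dd) (n k : ℕ),
      dist (approxSeq A F k z n) (U z n) ≤ C * c ^ k / (1 - c) := by
    intro z n k
    exact dist_le_of_le_geometric_of_tendsto c C hc1 (fun k => key k z n) (hU z n) k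
  -- continuity of the approximations in z
  have happroxcont : ∀ (k n : ℕ), Continuous fun z : ℕ → Dd => approxSeq A F k z n := by
    intro k
    induction k with
    | zero => intro n; simpa [approxSeq] using continuous_const
    | succ k ih =>
      intro n
      have : Continuous fun z : ℕ → Dd => (approxSeq A F k z (n+1), z n) :=
        (ih (n+1)).prodMk (continuous_apply n)
      simpa [approxSeq, Function.comp_def] using hFcont.comp this
  -- continuity of each coordinate of U via uniform convergence
  have hUcont : Continuous U := by
    refine continuous_pi fun n => ?_
    have htu : TendstoUniformly (fun k (z : ℕ → Dd) => approxSeq A F k z n)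
        (fun z => U z n) Filter.atTop := by
      rw [Metric.tendstoUniformly_iff]
      intro ε hε
      have htends : Filter.Tendsto (fun k => C * c ^ k / (1 - c)) Filter.atTop (nhds 0) := by
        have h1 : Filter.Tendsto (fun k : ℕ => c ^ k) Filter.atTop (nhds 0) :=
          tendsto_pow_atTop_nhds_zero_of_lt_one hc0.le hc1
        have := (h1.const_mul C).div_const (1 - c)
        simpa using this
      filter_upwards [htends.eventually (gt_mem_nhds hε)] with k hk z
      calc dist (U z n) (approxSeq A F k z n) = dist (approxSeq A F k z n) (U z n) :=
            dist_comm _ _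
        _ ≤ C * c ^ k / (1 - c) := hdistU z n k
        _ < ε := hk
    exact htu.continuous (Filter.Eventually.of_forall fun k => happroxcont k n).frequently
  refine ⟨U, hUcont, fun z => ⟨hrec z, ?_⟩⟩
  -- uniqueness
  intro x hx
  funext n
  have hiter : ∀ (k n : ℕ), dist (x n) (U z n) ≤ C * c ^ k := by
    intro k
    induction k with
    | zero => intro n; simpa using hdistC (x n) (U z n)
    | succ k ih =>
      intro n
      calc dist (x n) (U z n) = dist (F (x (n+1)) (z n)) (F (U z (n+1)) (z n)) := by
            rw [← hx n, ← hrec z n]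
        _ ≤ c * dist (x (n+1)) (U z (n+1)) := hFd _ _ _
        _ ≤ c * (C * c ^ k) := mul_le_mul_of_nonneg_left (ih (n+1)) hc0.le
        _ = C * c ^ (k+1) := by ring
  have hzero : dist (x n) (U z n) ≤ 0 := by
    have htends : Filter.Tendsto (fun k : ℕ => C * c ^ k) Filter.atTop (nhds 0) := by
      have h1 : Filter.Tendsto (fun k : ℕ => c ^ k) Filter.atTop (nhds 0) :=
        tendsto_pow_atTop_nhds_zero_of_lt_one hc0.le hc1
      simpa using h1.const_mul C
    exact ge_of_tendsto' htends fun k => hiter k n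
  exact (dist_le_zero.mp hzero)
end

section
/- Let (F₁, h₁) and (F₂, h₂) be state-space systems with F_i : D_{N_i} × D_d → D_{N_i} and readouts h_i : D_{N_i} → ℝ^m, and let f : D_{N₁} → D_{N₂} be a system morphism between them (f is system equivariant and readout invariant). Suppose the system (F₂, h₂) has the echo state property and that the state system determined by F₁ has at least one solution for every input z ∈ (D_d)^{ℤ₋}. Then (F₁, h₁) has the echo state property and the induced state-space filters coincide: U^{F₁}_{h₁}(z) = U^{F₂}_{h₂}(z) for all z ∈ (D_d)^{ℤ₋}. -/
/- STATEMENT 2: a system morphism towards a system with the echo state property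
   transports the ESP back and the induced filters coincide.
   ℤ₋ is encoded by ℕ via n ↦ -n; x_t = F(x_{t-1}, z_t) becomes
   x n = F (x (n+1)) (z n).  The ESP of a state-space system (F, h) is:
   every input has a unique associated output sequence y = h ∘ x. -/
theorem stmt_2 {N₁ N₂ d m : ℕ}
    (DN₁ : Set (EuclideanSpace ℝ (Fin N₁))) (DN₂ : Set (EuclideanSpace ℝ (Fin N₂)))
    (Dd : Set (EuclideanSpace ℝ (Fin d)))
    (F₁ : DN₁ → Dd → DN₁) (F₂ : DN₂ → Dd → DN₂)
    (h₁ : DN₁ → EuclideanSpace ℝ (Fin m)) (h₂ : DN₂ → EuclideanSpace ℝ (Fin m))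
    (f : DN₁ → DN₂)
    (hequiv : ∀ (x : DN₁) (z : Dd), f (F₁ x z) = F₂ (f x) z)
    (hread : ∀ x : DN₁, h₁ x = h₂ (f x))
    (hESP₂ : ∀ z : ℕ → Dd, ∃! y : ℕ → EuclideanSpace ℝ (Fin m),
      ∃ x : ℕ → DN₂, (∀ n, x n = F₂ (x (n + 1)) (z n)) ∧ y = fun n => h₂ (x n))
    (hsol₁ : ∀ z : ℕ → Dd, ∃ x : ℕ → DN₁, ∀ n, x n = F₁ (x (n + 1)) (z n)) :
    (∀ z : ℕ → Dd, ∃! y : ℕ → EuclideanSpace ℝ (Fin m),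
      ∃ x : ℕ → DN₁, (∀ n, x n = F₁ (x (n + 1)) (z n)) ∧ y = fun n => h₁ (x n)) ∧
    (∀ (z : ℕ → Dd) (x₁ : ℕ → DN₁) (x₂ : ℕ → DN₂),
      (∀ n, x₁ n = F₁ (x₁ (n + 1)) (z n)) → (∀ n, x₂ n = F₂ (x₂ (n + 1)) (z n)) →
      ∀ n, h₁ (x₁ n) = h₂ (x₂ n)) := by
  -- key: any F₁-solution pushes forward to an F₂-solution, so its output is
  -- the unique F₂-output
  have key : ∀ (z : ℕ → Dd) (x₁ : ℕ → DN₁) (x₂ : ℕ → DN₂),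
      (∀ n, x₁ n = F₁ (x₁ (n + 1)) (z n)) → (∀ n, x₂ n = F₂ (x₂ (n + 1)) (z n)) →
      (fun n => h₁ (x₁ n)) = fun n => h₂ (x₂ n) := by
    intro z x₁ x₂ hx₁ hx₂
    obtain ⟨y, hy, huniq⟩ := hESP₂ z
    have h1 : (fun n => h₁ (x₁ n)) = y := by
      apply huniq
      refine ⟨fun n => f (x₁ n), ?_, ?_⟩
      · intro n; dsimp only; rw [hx₁ n, hequiv]
      · funext n; exact hread (x₁ n)
    have h2 : (fun n => h₂ (x₂ n)) = y := huniq _ ⟨x₂, hx₂, rfl⟩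
    rw [h1, h2]
  constructor
  · intro z
    obtain ⟨x, hx⟩ := hsol₁ z
    refine ⟨fun n => h₁ (x n), ⟨x, hx, rfl⟩, ?_⟩
    rintro y' ⟨x', hx', rfl⟩
    have A := key z x' (fun n => f (x n)) hx'
      (by intro n; rw [hx n, hequiv])
    have B := key z x (fun n => f (x n)) hx
      (by intro n; rw [hx n, hequiv])
    exact A.trans B.symm
  · intro z x₁ x₂ hx₁ hx₂ n
    exact congrFun (key z x₁ x₂ hx₁ hx₂) n
end

section
/- Let F : D_N × D_d → D_N be a state map that has the echo state property and whose state filter U^F : (D_d)^{ℤ₋} → (D_N)^{ℤ₋} is continuous with respect to the product topologies. If the input process Z : Ω → (D_d)^{ℤ₋} is strictly stationary, then so is the state process X := U^F(Z) : Ω → (D_N)^{ℤ₋}, and the joint processes (T_{−τ}(X), Z) and (X, T_{−τ}(Z)) are strictly stationary for every τ ∈ ℤ₋. -/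
open MeasureTheory

/- STATEMENT 3: a continuous state filter maps strictly stationary inputs to
   strictly stationary states, jointly with the (shifted) inputs.
   ℤ₋ is encoded by ℕ via n ↦ -n, so the time delay operator T_{-τ} (τ ∈ ℤ₋,
   τ = -k) becomes the shift (T z) n = z (n + k).  Strict stationarity of a
   process is the equality of the laws of all its shifts. -/
theorem stmt_3 {N d : ℕ}
    (DN : Set (EuclideanSpace ℝ (Fin N))) (Dd : Set (EuclideanSpace ℝ (Fin d)))
    (F : DN → Dd → DN)
    (U : (ℕ → Dd) → (ℕ → DN))
    (hUsol : ∀ z : ℕ → Dd, ∀ n, U z n = F (U z (n + 1)) (z n))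
    (hESP : ∀ (z : ℕ → Dd) (x : ℕ → DN), (∀ n, x n = F (x (n + 1)) (z n)) → x = U z)
    (hUcont : Continuous U)
    {Ω : Type*} [MeasurableSpace Ω] (μ : Measure Ω) [IsProbabilityMeasure μ]
    (Z : Ω → ℕ → Dd) (hZmeas : Measurable Z)
    (hZstat : ∀ k : ℕ,
      Measure.map (fun ω => fun n => Z ω (n + k)) μ = Measure.map Z μ) :
    -- the state process X := U ∘ Z is strictly stationary
    (∀ k : ℕ,
      Measure.map (fun ω => fun n => U (Z ω) (n + k)) μ =
        Measure.map (fun ω => U (Z ω)) μ) ∧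
    -- the joint process (T_{-τ}(X), Z) is strictly stationary for every lag τ = -t₀
    (∀ t₀ k : ℕ,
      Measure.map (fun ω => (fun n => U (Z ω) (n + t₀ + k), fun n => Z ω (n + k))) μ =
        Measure.map (fun ω => (fun n => U (Z ω) (n + t₀), Z ω)) μ) ∧
    -- the joint process (X, T_{-τ}(Z)) is strictly stationary for every lag τ = -t₀
    (∀ t₀ k : ℕ,
      Measure.map (fun ω => (fun n => U (Z ω) (n + k), fun n => Z ω (n + t₀ + k))) μ =
        Measure.map (fun ω => (U (Z ω), fun n => Z ω (n + t₀))) μ) := by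
  -- U commutes with the shift
  have hcomm : ∀ (k : ℕ) (z : ℕ → Dd),
      (fun n => U z (n + k)) = U (fun n => z (n + k)) := by
    intro k z
    refine hESP _ _ (fun n => ?_)
    have := hUsol z (n + k)
    rw [this]
    congr 2
    omega
  have hUmeas : Measurable U := hUcont.measurable
  -- shift on input sequences
  have hSd : ∀ k : ℕ, Measurable (fun z : ℕ → Dd => fun n => z (n + k)) :=
    fun k => measurable_pi_lambda _ fun n => measurable_pi_apply _
  refine ⟨?_, ?_, ?_⟩
  · intro k
    have h1 : (fun ω => fun n => U (Z ω) (n + k)) =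
        U ∘ (fun ω => fun n => Z ω (n + k)) := by
      funext ω; exact hcomm k (Z ω)
    have hmz : Measurable (fun ω => fun n => Z ω (n + k)) := (hSd k).comp hZmeas
    calc Measure.map (fun ω => fun n => U (Z ω) (n + k)) μ
        = Measure.map U (Measure.map (fun ω => fun n => Z ω (n + k)) μ) := by
          rw [Measure.map_map hUmeas hmz, ← h1]
      _ = Measure.map U (Measure.map Z μ) := by rw [hZstat k]
      _ = Measure.map (fun ω => U (Z ω)) μ := Measure.map_map hUmeas hZmeas
  · intro t₀ k
    set G : (ℕ → Dd) → (ℕ → DN) × (ℕ → Dd) := fun z => (fun n => U z (n + t₀), z) with hG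
    have hGmeas : Measurable G := by
      refine Measurable.prod ?_ measurable_id
      show Measurable fun z : ℕ → Dd => (fun n => U z (n + t₀))
      exact (measurable_pi_lambda _ fun n => (measurable_pi_apply _).comp hUmeas)
    have h1 : (fun ω => (fun n => U (Z ω) (n + t₀ + k), fun n => Z ω (n + k))) =
        G ∘ (fun ω => fun n => Z ω (n + k)) := by
      funext ω
      simp only [Function.comp, hG]
      refine Prod.ext ?_ rfl
      have := hcomm k (Z ω)
      funext n
      calc U (Z ω) (n + t₀ + k) = (fun m => U (Z ω) (m + k)) (n + t₀) := rfl
        _ = U (fun m => Z ω (m + k)) (n + t₀) := by rw [this]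
    have h2 : (fun ω => (fun n => U (Z ω) (n + t₀), Z ω)) = G ∘ Z := rfl
    have hmz : Measurable (fun ω => fun n => Z ω (n + k)) := (hSd k).comp hZmeas
    calc Measure.map (fun ω => (fun n => U (Z ω) (n + t₀ + k), fun n => Z ω (n + k))) μ
        = Measure.map G (Measure.map (fun ω => fun n => Z ω (n + k)) μ) := by
          rw [Measure.map_map hGmeas hmz, ← h1]
      _ = Measure.map G (Measure.map Z μ) := by rw [hZstat k]
      _ = Measure.map (fun ω => (fun n => U (Z ω) (n + t₀), Z ω)) μ := by
          rw [Measure.map_map hGmeas hZmeas, ← h2]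
  · intro t₀ k
    set H : (ℕ → Dd) → (ℕ → DN) × (ℕ → Dd) :=
      fun z => (U z, fun n => z (n + t₀)) with hH
    have hHmeas : Measurable H := Measurable.prod (f := H) hUmeas (hSd t₀)
    have h1 : (fun ω => (fun n => U (Z ω) (n + k), fun n => Z ω (n + t₀ + k))) =
        H ∘ (fun ω => fun n => Z ω (n + k)) := by
      funext ω
      simp only [Function.comp, hH]
      refine Prod.ext ?_ ?_
      · exact hcomm k (Z ω)
      · rfl
    have h2 : (fun ω => (U (Z ω), fun n => Z ω (n + t₀))) = H ∘ Z := rfl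
    have hmz : Measurable (fun ω => fun n => Z ω (n + k)) := (hSd k).comp hZmeas
    calc Measure.map (fun ω => (fun n => U (Z ω) (n + k), fun n => Z ω (n + t₀ + k))) μ
        = Measure.map H (Measure.map (fun ω => fun n => Z ω (n + k)) μ) := by
          rw [Measure.map_map hHmeas hmz, ← h1]
      _ = Measure.map H (Measure.map Z μ) := by rw [hZstat k]
      _ = Measure.map (fun ω => (U (Z ω), fun n => Z ω (n + t₀))) μ := by
          rw [Measure.map_map hHmeas hZmeas, ← h2]
end

section
/- Let Z be a variance-stationary real-valued input process and F a state map with the echo state property on the paths of Z such that the state process X_t := U^F(Z)_t is covariance stationary and the joint processes (T_{−τ}X, Z) and (X, T_{−τ}Z) are covariance stationary for every τ ∈ ℤ₋. If the covariance matrix Γ_X := Cov(X_t, X_t) is invertible, then for every τ ∈ ℤ₋ the lagged capacities are given explicitly by MC_τ = Cov(Z_{t+τ}, X_t) Γ_X^{−1} Cov(X_t, Z_{t+τ}) / Var(Z_t) and FC_τ = Cov(Z_t, X_{t+τ}) Γ_X^{−1} Cov(X_{t+τ}, Z_t) / Var(Z_t). -/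
open Matrix MeasureTheory

/-- Expectation of a real random variable. -/
noncomputable def expv {Ω : Type*} [MeasurableSpace Ω] (μ : Measure Ω) (f : Ω → ℝ) : ℝ :=
  ∫ ω, f ω ∂μ

/-- Covariance of two real random variables. -/
noncomputable def covv {Ω : Type*} [MeasurableSpace Ω] (μ : Measure Ω) (f g : Ω → ℝ) : ℝ :=
  ∫ ω, (f ω - expv μ f) * (g ω - expv μ g) ∂μ

/-- The τ-lag memory capacity (τ = -k ∈ ℤ₋).  ℤ₋ is encoded by ℕ via n ↦ -n, so
the state at time 0 has index 0 and the input at time τ = -k has index k: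
MC_τ = 1 - (1/Var(Z_t)) min_{W,a} E[(Z_{t+τ} - Wᵀ X_t - a)²]. -/
noncomputable def memCap {Ω : Type*} [MeasurableSpace Ω] (μ : Measure Ω) {N : ℕ}
    (Z : ℕ → Ω → ℝ) (X : ℕ → Ω → (Fin N → ℝ)) (k : ℕ) : ℝ :=
  1 - (1 / covv μ (Z 0) (Z 0)) *
    ⨅ p : (Fin N → ℝ) × ℝ, ∫ ω, (Z k ω - p.1 ⬝ᵥ X 0 ω - p.2) ^ 2 ∂μ

/-- The τ-lag forecasting capacity (τ = -k ∈ ℤ⁻, k ≥ 1).  By time invariance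
U^F(T_{-τ}Z)_t = X_{t+τ}, which in the ℕ-encoding is the state of index k:
FC_τ = 1 - (1/Var(Z_t)) min_{W,a} E[(Z_t - Wᵀ U^F(T_{-τ}Z)_t - a)²]. -/
noncomputable def foreCap {Ω : Type*} [MeasurableSpace Ω] (μ : Measure Ω) {N : ℕ}
    (Z : ℕ → Ω → ℝ) (X : ℕ → Ω → (Fin N → ℝ)) (k : ℕ) : ℝ :=
  1 - (1 / covv μ (Z 0) (Z 0)) *
    ⨅ p : (Fin N → ℝ) × ℝ, ∫ ω, (Z 0 ω - p.1 ⬝ᵥ X k ω - p.2) ^ 2 ∂μ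

section Aux

variable {Ω : Type*} [MeasurableSpace Ω] {μ : Measure Ω}

lemma l2_mul_int {f g : Ω → ℝ} (hf : MemLp f 2 μ) (hg : MemLp g 2 μ) :
    Integrable (fun ω => f ω * g ω) μ := by
  have h1 := (hf.add hg).integrable_sq
  have h2 := hf.integrable_sq
  have h3 := hg.integrable_sq
  have h : (fun ω => f ω * g ω) = fun ω => ((((f + g) ω) ^ 2 - f ω ^ 2) - g ω ^ 2) / 2 := by
    funext ω; simp only [Pi.add_apply]; ring
  rw [h]; exact ((h1.sub h2).sub h3).div_const 2

lemma covv_comm (f g : Ω → ℝ) : covv μ f g = covv μ g f := by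
  unfold covv
  exact integral_congr_ae (Filter.Eventually.of_forall fun ω => mul_comm _ _)

lemma memℒp_sum_mul {N : ℕ} (W : Fin N → ℝ) (g : Fin N → Ω → ℝ)
    (hg : ∀ i, MemLp (g i) 2 μ) :
    MemLp (fun ω => ∑ j, W j * g j ω) 2 μ := by
  have h : (fun ω => ∑ j, W j * g j ω) = ∑ j, fun ω => W j * g j ω := by
    funext ω; simp [Finset.sum_apply]
  rw [h]
  exact memLp_finset_sum' _ fun j _ => (hg j).const_mul (W j)

lemma reg_inf {N : ℕ} [IsProbabilityMeasure μ]
    (Y : Ω → ℝ) (X : Ω → Fin N → ℝ) (hY : MemLp Y 2 μ)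
    (hX : ∀ i, MemLp (fun ω => X ω i) 2 μ)
    (Γ : Matrix (Fin N) (Fin N) ℝ)
    (hΓ : ∀ i j, covv μ (fun ω => X ω i) (fun ω => X ω j) = Γ i j)
    (hΓinv : IsUnit Γ.det) :
    (⨅ p : (Fin N → ℝ) × ℝ, ∫ ω, (Y ω - p.1 ⬝ᵥ X ω - p.2) ^ 2 ∂μ)
      = covv μ Y Y -
        (fun i => covv μ (fun ω => X ω i) Y) ⬝ᵥ
          (Γ⁻¹ *ᵥ fun i => covv μ (fun ω => X ω i) Y) := by
  classical
  set c : Fin N → ℝ := fun i => covv μ (fun ω => X ω i) Y with hc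
  set Ws : Fin N → ℝ := Γ⁻¹ *ᵥ c with hWs
  set f : Ω → ℝ := fun ω => Y ω - expv μ Y with hf
  set g : Fin N → Ω → ℝ := fun i ω => X ω i - expv μ (fun ω => X ω i) with hg
  have hf2 : MemLp f 2 μ := hY.sub (memLp_const _)
  have hg2 : ∀ i, MemLp (g i) 2 μ := fun i => (hX i).sub (memLp_const _)
  have intf : ∫ ω, f ω ∂μ = 0 := by
    show ∫ ω, (Y ω - expv μ Y) ∂μ = 0
    rw [integral_sub (hY.integrable one_le_two) (integrable_const _), integral_const]
    simp [expv]
  have intg : ∀ i, ∫ ω, g i ω ∂μ = 0 := by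
    intro i
    show ∫ ω, (X ω i - expv μ (fun ω => X ω i)) ∂μ = 0
    rw [integral_sub ((hX i).integrable one_le_two) (integrable_const _), integral_const]
    simp [expv]
  have hgf : ∀ i, ∫ ω, g i ω * f ω ∂μ = c i := fun i => rfl
  have hff : ∫ ω, f ω * f ω ∂μ = covv μ Y Y := rfl
  have hgg : ∀ i j, ∫ ω, g i ω * g j ω ∂μ = Γ i j := fun i j => hΓ i j
  set ε : Ω → ℝ := fun ω => f ω - ∑ j, Ws j * g j ω with hε
  have hs2 : MemLp (fun ω => ∑ j, Ws j * g j ω) 2 μ := memℒp_sum_mul Ws g hg2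
  have hε2 : MemLp ε 2 μ := hf2.sub hs2
  -- expansion of ∫ ε * u
  have key : ∀ u : Ω → ℝ, MemLp u 2 μ →
      ∫ ω, ε ω * u ω ∂μ = ∫ ω, f ω * u ω ∂μ - ∑ j, Ws j * ∫ ω, g j ω * u ω ∂μ := by
    intro u hu
    have h1 : ∀ ω, ε ω * u ω = f ω * u ω - ∑ j, Ws j * (g j ω * u ω) := by
      intro ω
      show (f ω - ∑ j, Ws j * g j ω) * u ω = _
      rw [sub_mul, Finset.sum_mul]
      congr 1
      exact Finset.sum_congr rfl fun j _ => by ring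
    calc ∫ ω, ε ω * u ω ∂μ
        = ∫ ω, (f ω * u ω - ∑ j, Ws j * (g j ω * u ω)) ∂μ :=
          integral_congr_ae (Filter.Eventually.of_forall h1)
      _ = ∫ ω, f ω * u ω ∂μ - ∫ ω, ∑ j, Ws j * (g j ω * u ω) ∂μ :=
          integral_sub (l2_mul_int hf2 hu)
            (integrable_finset_sum _ fun j _ => (l2_mul_int (hg2 j) hu).const_mul (Ws j))
      _ = ∫ ω, f ω * u ω ∂μ - ∑ j, Ws j * ∫ ω, g j ω * u ω ∂μ := by
          rw [integral_finset_sum _ fun j _ => (l2_mul_int (hg2 j) hu).const_mul (Ws j)]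
          congr 1
          exact Finset.sum_congr rfl fun j _ => integral_const_mul _ _
  have hΓsym : ∀ i j, Γ i j = Γ j i := by
    intro i j
    rw [← hΓ i j, ← hΓ j i, covv_comm]
  have hΓWs : ∀ i, ∑ j, Ws j * Γ j i = c i := by
    intro i
    have h1 : Γ *ᵥ Ws = c := by
      rw [hWs, Matrix.mulVec_mulVec, Matrix.mul_nonsing_inv Γ hΓinv, Matrix.one_mulVec]
    have h2 : (Γ *ᵥ Ws) i = c i := by rw [h1]
    rw [← h2]
    simp only [Matrix.mulVec, dotProduct]
    exact Finset.sum_congr rfl fun j _ => by rw [hΓsym i j]; ring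
  have hεg : ∀ i, ∫ ω, ε ω * g i ω ∂μ = 0 := by
    intro i
    rw [key (g i) (hg2 i)]
    have h1 : ∫ ω, f ω * g i ω ∂μ = c i := by
      rw [← hgf i]
      exact integral_congr_ae (Filter.Eventually.of_forall fun ω => mul_comm _ _)
    have h2 : ∀ j, ∫ ω, g j ω * g i ω ∂μ = Γ j i := fun j => hgg j i
    rw [h1]
    simp_rw [h2]
    rw [hΓWs i, sub_self]
  have hεint : ∫ ω, ε ω ∂μ = 0 := by
    show ∫ ω, (f ω - ∑ j, Ws j * g j ω) ∂μ = 0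
    rw [integral_sub (hf2.integrable one_le_two)
      (integrable_finset_sum _ fun j _ => ((hg2 j).integrable one_le_two).const_mul (Ws j)),
      integral_finset_sum _ fun j _ => ((hg2 j).integrable one_le_two).const_mul (Ws j), intf]
    simp_rw [integral_const_mul]
    simp [intg]
  set m : ℝ := ∫ ω, ε ω ^ 2 ∂μ with hm
  -- value of m
  have hmval : m = covv μ Y Y - ∑ j, Ws j * c j := by
    have h0 : m = ∫ ω, ε ω * ε ω ∂μ :=
      integral_congr_ae (Filter.Eventually.of_forall fun ω => by
        show ε ω ^ 2 = ε ω * ε ω; ring)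
    rw [h0, key ε hε2]
    have h1 : ∫ ω, f ω * ε ω ∂μ = ∫ ω, ε ω * f ω ∂μ :=
      integral_congr_ae (Filter.Eventually.of_forall fun ω => mul_comm _ _)
    have h2 : ∫ ω, ε ω * f ω ∂μ = covv μ Y Y - ∑ j, Ws j * c j := by
      rw [key f hf2, hff]
      simp_rw [hgf]
    have h3 : ∀ j, ∫ ω, g j ω * ε ω ∂μ = 0 := by
      intro j
      rw [← hεg j]
      exact integral_congr_ae (Filter.Eventually.of_forall fun ω => mul_comm _ _)
    simp_rw [h3]
    rw [h1, h2]
    simp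
  -- decomposition for arbitrary (W, a)
  have hdecomp : ∀ (W : Fin N → ℝ) (a : ℝ),
      ∫ ω, (Y ω - W ⬝ᵥ X ω - a) ^ 2 ∂μ
        = m + ∫ ω, (∑ j, (Ws j - W j) * g j ω +
            (expv μ Y - (∑ j, W j * expv μ (fun ω => X ω j)) - a)) ^ 2 ∂μ := by
    intro W a
    set b : ℝ := expv μ Y - (∑ j, W j * expv μ (fun ω => X ω j)) - a with hb
    set h : Ω → ℝ := fun ω => ∑ j, (Ws j - W j) * g j ω + b with hh
    have hh2 : MemLp h 2 μ :=
      (memℒp_sum_mul (fun j => Ws j - W j) g hg2).add (memLp_const b)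
    have hpt : ∀ ω, Y ω - W ⬝ᵥ X ω - a = ε ω + h ω := by
      intro ω
      show Y ω - W ⬝ᵥ X ω - a
          = (f ω - ∑ j, Ws j * g j ω) + (∑ j, (Ws j - W j) * g j ω + b)
      rw [hb, hf]
      simp only [dotProduct, hg, sub_mul, mul_sub, Finset.sum_sub_distrib]
      ring
    have hεh : ∫ ω, ε ω * h ω ∂μ = 0 := by
      have h1 : ∀ ω, ε ω * h ω = ∑ j, (Ws j - W j) * (ε ω * g j ω) + b * ε ω := by
        intro ω
        show ε ω * (∑ j, (Ws j - W j) * g j ω + b) = _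
        rw [mul_add, Finset.mul_sum, mul_comm (ε ω) b]
        congr 1
        exact Finset.sum_congr rfl fun j _ => by ring
      calc ∫ ω, ε ω * h ω ∂μ
          = ∫ ω, (∑ j, (Ws j - W j) * (ε ω * g j ω) + b * ε ω) ∂μ :=
            integral_congr_ae (Filter.Eventually.of_forall h1)
        _ = 0 := by
            rw [integral_add
              (integrable_finset_sum _ fun j _ =>
                (l2_mul_int hε2 (hg2 j)).const_mul (Ws j - W j))
              ((hε2.integrable one_le_two).const_mul b),
              integral_finset_sum _ fun j _ =>
                (l2_mul_int hε2 (hg2 j)).const_mul (Ws j - W j)]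
            simp_rw [integral_const_mul]
            simp [hεg, hεint]
    have hint1 : Integrable (fun ω => 2 * (ε ω * h ω) + h ω ^ 2) μ :=
      ((l2_mul_int hε2 hh2).const_mul 2).add hh2.integrable_sq
    calc ∫ ω, (Y ω - W ⬝ᵥ X ω - a) ^ 2 ∂μ
        = ∫ ω, (ε ω ^ 2 + (2 * (ε ω * h ω) + h ω ^ 2)) ∂μ :=
          integral_congr_ae (Filter.Eventually.of_forall fun ω => by
            show (Y ω - W ⬝ᵥ X ω - a) ^ 2 = ε ω ^ 2 + (2 * (ε ω * h ω) + h ω ^ 2)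
            rw [hpt ω]; ring)
      _ = m + ∫ ω, (2 * (ε ω * h ω) + h ω ^ 2) ∂μ := by
          rw [integral_add hε2.integrable_sq hint1]
      _ = m + ∫ ω, h ω ^ 2 ∂μ := by
          rw [integral_add ((l2_mul_int hε2 hh2).const_mul 2) hh2.integrable_sq,
            integral_const_mul, hεh]
          ring
  -- lower bound
  have hlb : ∀ p : (Fin N → ℝ) × ℝ, m ≤ ∫ ω, (Y ω - p.1 ⬝ᵥ X ω - p.2) ^ 2 ∂μ := by
    intro p
    rw [hdecomp p.1 p.2]
    have : 0 ≤ ∫ ω, (∑ j, (Ws j - p.1 j) * g j ω +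
        (expv μ Y - (∑ j, p.1 j * expv μ (fun ω => X ω j)) - p.2)) ^ 2 ∂μ :=
      integral_nonneg fun ω => sq_nonneg _
    linarith
  -- attained value
  have hub : ∫ ω, (Y ω - Ws ⬝ᵥ X ω -
      (expv μ Y - ∑ j, Ws j * expv μ (fun ω => X ω j))) ^ 2 ∂μ = m := by
    rw [hdecomp Ws (expv μ Y - ∑ j, Ws j * expv μ (fun ω => X ω j))]
    have h0 : ∀ ω : Ω, (∑ j, (Ws j - Ws j) * g j ω +
        (expv μ Y - (∑ j, Ws j * expv μ (fun ω => X ω j)) -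
          (expv μ Y - ∑ j, Ws j * expv μ (fun ω => X ω j)))) ^ 2 = (0 : ℝ) := by
      intro ω; simp
    rw [integral_congr_ae (Filter.Eventually.of_forall h0)]
    simp
  have hinf : (⨅ p : (Fin N → ℝ) × ℝ, ∫ ω, (Y ω - p.1 ⬝ᵥ X ω - p.2) ^ 2 ∂μ) = m := by
    apply le_antisymm
    · have := ciInf_le (f := fun p : (Fin N → ℝ) × ℝ => ∫ ω, (Y ω - p.1 ⬝ᵥ X ω - p.2) ^ 2 ∂μ)
        ⟨m, by rintro x ⟨p, rfl⟩; exact hlb p⟩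
        ((Ws, expv μ Y - ∑ j, Ws j * expv μ (fun ω => X ω j)) : (Fin N → ℝ) × ℝ)
      simpa [hub] using this
    · exact le_ciInf hlb
  rw [hinf, hmval]
  congr 1
  rw [dotProduct_comm]
  rfl
end Aux

/- STATEMENT 5: closed-form expressions for the lagged memory and forecasting
   capacities when the state covariance matrix Γ_X is invertible. -/
theorem stmt_5 {N : ℕ} (D : Set ℝ) (DN : Set (Fin N → ℝ))
    (F : (Fin N → ℝ) → ℝ → (Fin N → ℝ))
    (hF : ∀ x ∈ DN, ∀ z ∈ D, F x z ∈ DN)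
    -- F has the echo state property on inputs with values in D
    (hESP : ∀ z : ℕ → ℝ, (∀ n, z n ∈ D) →
      ∃! x : ℕ → (Fin N → ℝ), (∀ n, x n ∈ DN) ∧ ∀ n, x n = F (x (n + 1)) (z n))
    {Ω : Type*} [MeasurableSpace Ω] (μ : Measure Ω) [IsProbabilityMeasure μ]
    (Z : ℕ → Ω → ℝ) (X : ℕ → Ω → (Fin N → ℝ))
    (hZD : ∀ t ω, Z t ω ∈ D) (hXD : ∀ t ω, X t ω ∈ DN)
    -- X = U^F(Z) is the state process associated to F and Z
    (hXsol : ∀ t ω, X t ω = F (X (t + 1) ω) (Z t ω))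
    -- square integrability
    (hZ2 : ∀ t, MemLp (Z t) 2 μ) (hX2 : ∀ t i, MemLp (fun ω => X t ω i) 2 μ)
    -- Z is variance stationary (with positive variance)
    (hZmean : ∀ t, expv μ (Z t) = expv μ (Z 0))
    (hZvar : ∀ t, covv μ (Z t) (Z t) = covv μ (Z 0) (Z 0))
    (hvarpos : 0 < covv μ (Z 0) (Z 0))
    -- X is covariance stationary with covariance matrix Γ_X = Γ
    (Γ : Matrix (Fin N) (Fin N) ℝ)
    (hΓ : ∀ t i j, covv μ (fun ω => X t ω i) (fun ω => X t ω j) = Γ i j)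
    -- the joint processes (T_{-τ}X, Z) and (X, T_{-τ}Z) are covariance
    -- stationary: the cross covariances depend only on the lag
    (hcross : ∀ (t s t' s' : ℕ) (i : Fin N), (s : ℤ) - (t : ℤ) = (s' : ℤ) - (t' : ℤ) →
      covv μ (fun ω => X t ω i) (Z s) = covv μ (fun ω => X t' ω i) (Z s'))
    -- Γ_X is invertible
    (hΓinv : IsUnit Γ.det) :
    ∀ k : ℕ,
      memCap μ Z X k =
        (fun i => covv μ (Z k) (fun ω => X 0 ω i)) ⬝ᵥ
            (Γ⁻¹ *ᵥ fun i => covv μ (fun ω => X 0 ω i) (Z k)) /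
          covv μ (Z 0) (Z 0) ∧
      foreCap μ Z X (k + 1) =
        (fun i => covv μ (Z 0) (fun ω => X (k + 1) ω i)) ⬝ᵥ
            (Γ⁻¹ *ᵥ fun i => covv μ (fun ω => X (k + 1) ω i) (Z 0)) /
          covv μ (Z 0) (Z 0) := by
  intro k
  have V := covv μ (Z 0) (Z 0)
  have hV : covv μ (Z 0) (Z 0) ≠ 0 := ne_of_gt hvarpos
  constructor
  · unfold memCap
    rw [reg_inf (Z k) (X 0) (hZ2 k) (hX2 0) Γ (fun i j => hΓ 0 i j) hΓinv]
    rw [hZvar k]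
    have hcomm : (fun i => covv μ (Z k) (fun ω => X 0 ω i))
        = fun i => covv μ (fun ω => X 0 ω i) (Z k) := by
      funext i; rw [covv_comm]
    rw [hcomm]
    field_simp
    ring
  · unfold foreCap
    rw [reg_inf (Z 0) (X (k + 1)) (hZ2 0) (hX2 (k + 1)) Γ (fun i j => hΓ (k + 1) i j) hΓinv]
    have hcomm : (fun i => covv μ (Z 0) (fun ω => X (k + 1) ω i))
        = fun i => covv μ (fun ω => X (k + 1) ω i) (Z 0) := by
      funext i; rw [covv_comm]
    rw [hcomm]
    field_simp
    ring
end

section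
/- Let Z be a variance-stationary real-valued input process and let F₂ : D_{N₂} × D → D_{N₂} be a state map satisfying the conditions in the definition of memory and forecasting capacities with respect to Z (ESP on the paths of Z and covariance stationarity of the state and joint processes). Let F₁ : D_{N₁} × D → D_{N₁} be another state map that has at least one solution for each z ∈ D^{ℤ₋}, and let f : ℝ^{N₁} → ℝ^{N₂} be an injective linear system equivariant map between F₁ and F₂. Then the memory and forecasting capacities of F₁ with respect to Z are well-defined and coincide with those of F₂ with respect to Z (MC_τ and FC_τ agree for every lag τ, and hence so do the total capacities MC and FC). -/
open Matrix MeasureTheory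

section Aux

/-- dot product as a linear map -/
noncomputable def dotL {n : ℕ} (W : Fin n → ℝ) : (Fin n → ℝ) →ₗ[ℝ] ℝ where
  toFun x := W ⬝ᵥ x
  map_add' x y := by simp [dotProduct_add]
  map_smul' c x := by simp [dotProduct_smul]

lemma dot_of_linear {n : ℕ} (L : (Fin n → ℝ) →ₗ[ℝ] ℝ) (x : Fin n → ℝ) :
    (fun i => L (fun j => if i = j then (1:ℝ) else 0)) ⬝ᵥ x = L x := by
  conv_rhs => rw [pi_eq_sum_univ x, map_sum]
  simp only [_root_.map_smul, smul_eq_mul]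
  simp [dotProduct, mul_comm]

end Aux

/- STATEMENT 6: the memory and forecasting capacities are invariant under
   injective linear system equivariant maps: the capacities of F₁ are
   well-defined and agree at every lag with those of F₂ (hence so do the total
   capacities MC = ∑_τ MC_τ and FC = ∑_τ FC_τ). -/
theorem stmt_6 {N₁ N₂ : ℕ} (D : Set ℝ)
    (F₁ : (Fin N₁ → ℝ) → ℝ → (Fin N₁ → ℝ)) (F₂ : (Fin N₂ → ℝ) → ℝ → (Fin N₂ → ℝ))
    -- F₂ satisfies the conditions of the capacity definition: the ESP …
    (hESP₂ : ∀ z : ℕ → ℝ, (∀ n, z n ∈ D) →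
      ∃! x : ℕ → (Fin N₂ → ℝ), ∀ n, x n = F₂ (x (n + 1)) (z n))
    {Ω : Type*} [MeasurableSpace Ω] (μ : Measure Ω) [IsProbabilityMeasure μ]
    (Z : ℕ → Ω → ℝ) (hZD : ∀ t ω, Z t ω ∈ D)
    -- … and the stationarity/integrability conditions
    (hZ2 : ∀ t, MemLp (Z t) 2 μ)
    (hZmean : ∀ t, expv μ (Z t) = expv μ (Z 0))
    (hZvar : ∀ t, covv μ (Z t) (Z t) = covv μ (Z 0) (Z 0))
    (X₂ : ℕ → Ω → (Fin N₂ → ℝ))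
    (hX₂sol : ∀ t ω, X₂ t ω = F₂ (X₂ (t + 1) ω) (Z t ω))
    (hX₂2 : ∀ t i, MemLp (fun ω => X₂ t ω i) 2 μ)
    (Γ₂ : Matrix (Fin N₂) (Fin N₂) ℝ)
    (hΓ₂ : ∀ t i j, covv μ (fun ω => X₂ t ω i) (fun ω => X₂ t ω j) = Γ₂ i j)
    (hcross₂ : ∀ (t s t' s' : ℕ) (i : Fin N₂),
      (s : ℤ) - (t : ℤ) = (s' : ℤ) - (t' : ℤ) →
      covv μ (fun ω => X₂ t ω i) (Z s) = covv μ (fun ω => X₂ t' ω i) (Z s'))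
    -- F₁ has at least one solution for each input with values in D;
    -- X₁ is such a solution process for the input Z
    (hsol₁ : ∀ z : ℕ → ℝ, (∀ n, z n ∈ D) →
      ∃ x : ℕ → (Fin N₁ → ℝ), ∀ n, x n = F₁ (x (n + 1)) (z n))
    (X₁ : ℕ → Ω → (Fin N₁ → ℝ))
    (hX₁sol : ∀ t ω, X₁ t ω = F₁ (X₁ (t + 1) ω) (Z t ω))
    (hX₁2 : ∀ t i, MemLp (fun ω => X₁ t ω i) 2 μ)
    -- f is an injective linear system equivariant map between F₁ and F₂
    (f : (Fin N₁ → ℝ) →ₗ[ℝ] (Fin N₂ → ℝ)) (hfinj : Function.Injective f)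
    (hequiv : ∀ (x : Fin N₁ → ℝ) (z : ℝ), z ∈ D → f (F₁ x z) = F₂ (f x) z) :
    ∀ k : ℕ,
      memCap μ Z X₁ k = memCap μ Z X₂ k ∧
      foreCap μ Z X₁ (k + 1) = foreCap μ Z X₂ (k + 1) := by
  -- f ∘ X₁ coincides with X₂ by the echo state property
  have hfX : ∀ t ω, X₂ t ω = f (X₁ t ω) := by
    intro t ω
    obtain ⟨x, hx, hxu⟩ := hESP₂ (fun n => Z n ω) (fun n => hZD n ω)
    have h2 : (fun n => X₂ n ω) = x := hxu _ (fun n => hX₂sol n ω)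
    have h1 : (fun n => f (X₁ n ω)) = x := hxu _ (fun n => by
      rw [hX₁sol n ω, hequiv _ _ (hZD n ω)])
    exact (congrFun h2 t).trans (congrFun h1 t).symm
  have key : ∀ (g : Ω → ℝ) (t : ℕ),
      (⨅ p : (Fin N₁ → ℝ) × ℝ, ∫ ω, (g ω - p.1 ⬝ᵥ X₁ t ω - p.2) ^ 2 ∂μ)
        = ⨅ p : (Fin N₂ → ℝ) × ℝ, ∫ ω, (g ω - p.1 ⬝ᵥ X₂ t ω - p.2) ^ 2 ∂μ := by
    intro g t
    have bdd1 : BddBelow (Set.range fun p : (Fin N₁ → ℝ) × ℝ =>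
        ∫ ω, (g ω - p.1 ⬝ᵥ X₁ t ω - p.2) ^ 2 ∂μ) :=
      ⟨0, by rintro y ⟨p, rfl⟩; exact integral_nonneg fun ω => sq_nonneg _⟩
    have bdd2 : BddBelow (Set.range fun p : (Fin N₂ → ℝ) × ℝ =>
        ∫ ω, (g ω - p.1 ⬝ᵥ X₂ t ω - p.2) ^ 2 ∂μ) :=
      ⟨0, by rintro y ⟨p, rfl⟩; exact integral_nonneg fun ω => sq_nonneg _⟩
    apply le_antisymm
    · refine le_ciInf fun p => ?_
      set L : (Fin N₁ → ℝ) →ₗ[ℝ] ℝ := (dotL p.1).comp f with hL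
      have heq : (∫ ω, (g ω - (fun i => L (fun j => if i = j then (1:ℝ) else 0)) ⬝ᵥ X₁ t ω
          - p.2) ^ 2 ∂μ) = ∫ ω, (g ω - p.1 ⬝ᵥ X₂ t ω - p.2) ^ 2 ∂μ := by
        refine integral_congr_ae (Filter.Eventually.of_forall fun ω => ?_)
        dsimp only
        rw [dot_of_linear, hfX t ω]
        rfl
      exact heq ▸ ciInf_le bdd1 (⟨_, p.2⟩ : (Fin N₁ → ℝ) × ℝ)
    · refine le_ciInf fun p => ?_
      obtain ⟨ginv, hg⟩ := f.exists_leftInverse_of_injective (LinearMap.ker_eq_bot.mpr hfinj)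
      set L : (Fin N₂ → ℝ) →ₗ[ℝ] ℝ := (dotL p.1).comp ginv with hL
      have heq : (∫ ω, (g ω - (fun i => L (fun j => if i = j then (1:ℝ) else 0)) ⬝ᵥ X₂ t ω
          - p.2) ^ 2 ∂μ) = ∫ ω, (g ω - p.1 ⬝ᵥ X₁ t ω - p.2) ^ 2 ∂μ := by
        refine integral_congr_ae (Filter.Eventually.of_forall fun ω => ?_)
        dsimp only
        rw [dot_of_linear, hfX t ω]
        rw [hL, LinearMap.comp_apply, show ginv (f (X₁ t ω)) = X₁ t ω from LinearMap.congr_fun hg _]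
        rfl
      exact heq ▸ ciInf_le bdd2 (⟨_, p.2⟩ : (Fin N₂ → ℝ) × ℝ)
  intro k
  constructor
  · unfold memCap; rw [key (Z k) 0]
  · unfold foreCap; rw [key (Z 0) (k + 1)]
end

section
/- Consider the linear state map F(x, z) := Ax + Cz on ℝ^N with C ∈ ℝ^N, A ∈ M_N(ℝ) and σ_max(A) < 1, and let Z : Ω → D^ℤ (D ⊂ ℝ compact) be a zero-mean strictly stationary square-integrable input process with absolutely summable autocovariance function γ whose spectral density f satisfies f(λ) ≥ 0 on [−π, π] with f(λ) = 0 in at most countably many points. Suppose additionally that Z is a white noise (γ(h) = 0 for all h ≠ 0) and that the state covariance matrix Γ_X := Cov(X_t, X_t) of the state process X := U^{A,C}(Z) is non-singular. Then the total memory capacity and the total forecasting capacity of the linear system with respect to Z satisfy MC = N and FC = 0. -/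
open Matrix MeasureTheory

/-- The τ-lag memory capacity (τ = -k ∈ ℤ₋) of a system with two-sided-time
state process X and input Z (computed at present time t = 0, which is
justified by stationarity):
MC_τ = 1 - (1/Var(Z_t)) min_{W,a} E[(Z_{t+τ} - Wᵀ X_t - a)²]. -/
noncomputable def memCapZ {Ω : Type*} [MeasurableSpace Ω] (μ : Measure Ω) {N : ℕ}
    (Z : ℤ → Ω → ℝ) (X : ℤ → Ω → (Fin N → ℝ)) (k : ℕ) : ℝ :=
  1 - (1 / covv μ (Z 0) (Z 0)) *
    ⨅ p : (Fin N → ℝ) × ℝ, ∫ ω, (Z (-(k : ℤ)) ω - p.1 ⬝ᵥ X 0 ω - p.2) ^ 2 ∂μ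

/-- The τ-lag forecasting capacity (τ = -k ∈ ℤ⁻, k ≥ 1), computed at t = 0:
FC_τ = 1 - (1/Var(Z_t)) min_{W,a} E[(Z_t - Wᵀ X_{t+τ} - a)²]. -/
noncomputable def foreCapZ {Ω : Type*} [MeasurableSpace Ω] (μ : Measure Ω) {N : ℕ}
    (Z : ℤ → Ω → ℝ) (X : ℤ → Ω → (Fin N → ℝ)) (k : ℕ) : ℝ :=
  1 - (1 / covv μ (Z 0) (Z 0)) *
    ⨅ p : (Fin N → ℝ) × ℝ, ∫ ω, (Z 0 ω - p.1 ⬝ᵥ X (-(k : ℤ)) ω - p.2) ^ 2 ∂μ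

/-- The spectral density f(λ) = (1/2π) ∑_{n ∈ ℤ} e^{-inλ} γ(n) (γ(-n) = γ(n)). -/
noncomputable def specDens (γ : ℕ → ℝ) (x : ℝ) : ℂ :=
  (1 / (2 * Real.pi) : ℂ) * ∑' n : ℤ, Complex.exp (-Complex.I * n * x) * (γ n.natAbs : ℂ)

section AuxLemmas

/-- Commutation of the bilinear form of a symmetric matrix. -/
lemma dot_mulVec_comm {N : ℕ} {Γ : Matrix (Fin N) (Fin N) ℝ}
    (hsym : ∀ i j, Γ i j = Γ j i) (a b : Fin N → ℝ) :
    (Γ *ᵥ a) ⬝ᵥ b = (Γ *ᵥ b) ⬝ᵥ a := by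
  simp only [Matrix.mulVec, dotProduct, Finset.sum_mul]
  rw [Finset.sum_comm]
  exact Finset.sum_congr rfl fun i _ => Finset.sum_congr rfl fun j _ => by
    rw [hsym j i]; ring

/-- Minimisation of the quadratic functional arising from linear regression. -/
lemma quad_inf {N : ℕ} (Γ : Matrix (Fin N) (Fin N) ℝ)
    (hsym : ∀ i j, Γ i j = Γ j i)
    (hpsd : ∀ W : Fin N → ℝ, 0 ≤ (Γ *ᵥ W) ⬝ᵥ W)
    (v w : Fin N → ℝ) (hw : Γ *ᵥ w = v) (c : ℝ) :
    (⨅ p : (Fin N → ℝ) × ℝ,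
      (c - 2 * (p.1 ⬝ᵥ v) + (Γ *ᵥ p.1) ⬝ᵥ p.1 + p.2 ^ 2)) = c - w ⬝ᵥ v := by
  have key : ∀ p : (Fin N → ℝ) × ℝ,
      c - 2 * (p.1 ⬝ᵥ v) + (Γ *ᵥ p.1) ⬝ᵥ p.1 + p.2 ^ 2
        = (c - w ⬝ᵥ v) + ((Γ *ᵥ (p.1 - w)) ⬝ᵥ (p.1 - w) + p.2 ^ 2) := by
    intro p
    have h1 : Γ *ᵥ (p.1 - w) = Γ *ᵥ p.1 - v := by rw [Matrix.mulVec_sub, hw]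
    have h2 : (Γ *ᵥ p.1 - v) ⬝ᵥ (p.1 - w)
        = (Γ *ᵥ p.1) ⬝ᵥ p.1 - (Γ *ᵥ p.1) ⬝ᵥ w - (v ⬝ᵥ p.1 - v ⬝ᵥ w) := by
      rw [sub_dotProduct, dotProduct_sub, dotProduct_sub]
    have h3 : (Γ *ᵥ p.1) ⬝ᵥ w = v ⬝ᵥ p.1 := by
      rw [dot_mulVec_comm hsym p.1 w, hw]
    have h4 : p.1 ⬝ᵥ v = v ⬝ᵥ p.1 := dotProduct_comm _ _
    have h5 : w ⬝ᵥ v = v ⬝ᵥ w := dotProduct_comm _ _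
    rw [h1, h2, h3, h4, h5]
    ring
  have hbdd : BddBelow (Set.range fun p : (Fin N → ℝ) × ℝ =>
      c - 2 * (p.1 ⬝ᵥ v) + (Γ *ᵥ p.1) ⬝ᵥ p.1 + p.2 ^ 2) := by
    refine ⟨c - w ⬝ᵥ v, ?_⟩
    rintro x ⟨p, rfl⟩
    simp only [key p]
    have := hpsd (p.1 - w)
    nlinarith [sq_nonneg p.2]
  apply le_antisymm
  · refine ciInf_le_of_le hbdd (w, 0) ?_
    simp only [key (w, 0)]
    simp
  · refine le_ciInf fun p => ?_
    simp only [key p]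
    have := hpsd (p.1 - w)
    nlinarith [sq_nonneg p.2]

/-- Dominated-convergence swap of an infinite sum and an integral, in the
form needed below. -/
lemma hasSum_integral_mul {Ω : Type*} [MeasurableSpace Ω] (μ : Measure Ω)
    [IsProbabilityMeasure μ]
    (g : Ω → ℝ) (hg : AEStronglyMeasurable g μ) (Mg : ℝ) (hMg0 : 0 ≤ Mg)
    (hMg : ∀ ω, |g ω| ≤ Mg)
    (f : ℕ → Ω → ℝ) (hf : ∀ m, AEStronglyMeasurable (f m) μ)
    (b : ℕ → ℝ) (hb0 : ∀ m, 0 ≤ b m) (hb : Summable b) (hfb : ∀ m ω, |f m ω| ≤ b m)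
    (h : Ω → ℝ) (hh : ∀ ω, HasSum (fun m => f m ω) (h ω)) :
    HasSum (fun m => ∫ ω, g ω * f m ω ∂μ) (∫ ω, g ω * h ω ∂μ) := by
  apply hasSum_integral_of_dominated_convergence (bound := fun m (_ : Ω) => Mg * b m)
  · intro m; exact hg.mul (hf m)
  · intro m
    filter_upwards with ω
    rw [Real.norm_eq_abs, abs_mul]
    exact mul_le_mul (hMg ω) (hfb m ω) (abs_nonneg _) hMg0
  · filter_upwards with ω
    exact hb.mul_left Mg
  · exact integrable_const _
  · filter_upwards with ω
    exact (hh ω).mul_left (g ω)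

end AuxLemmas

/- STATEMENT 11: a linear recurrent network F(x,z) = Ax + Cz with σ_max(A) < 1
   (expressed as a Euclidean contraction bound) fed with a white noise input
   whose state covariance matrix is non-singular has total memory capacity
   MC = N and total forecasting capacity FC = 0. -/
theorem stmt_11 {N : ℕ} (hN : 0 < N)
    (A : Matrix (Fin N) (Fin N) ℝ) (C : Fin N → ℝ)
    (hA : ∃ c : ℝ, 0 ≤ c ∧ c < 1 ∧ ∀ x : Fin N → ℝ,
      Real.sqrt (∑ i, (A *ᵥ x) i ^ 2) ≤ c * Real.sqrt (∑ i, x i ^ 2))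
    (D : Set ℝ) (hD : IsCompact D)
    {Ω : Type*} [MeasurableSpace Ω] (μ : Measure Ω) [IsProbabilityMeasure μ]
    (Z : ℤ → Ω → ℝ) (hZD : ∀ t ω, Z t ω ∈ D)
    -- Z is square integrable, zero mean, and strictly stationary
    (hZ2 : ∀ t, MemLp (Z t) 2 μ)
    (hZmean : ∀ t, expv μ (Z t) = 0)
    (hstat : ∀ τ : ℤ, Measure.map (fun ω => fun t : ℤ => Z (t + τ) ω) μ =
      Measure.map (fun ω => fun t : ℤ => Z t ω) μ)
    -- autocovariance function γ of Z, absolutely summable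
    (γ : ℕ → ℝ) (hγ : ∀ (t : ℤ) (k : ℕ), covv μ (Z t) (Z (t + k)) = γ k)
    (habs : Summable fun j : ℕ => |γ j|)
    -- the spectral density is non-negative and vanishes at most countably often
    (hfpos : ∀ x ∈ Set.Icc (-Real.pi) Real.pi, 0 ≤ (specDens γ x).re)
    (hfzero : Set.Countable {x ∈ Set.Icc (-Real.pi) Real.pi | (specDens γ x).re = 0})
    -- Z is a white noise
    (hwn : ∀ k : ℕ, k ≠ 0 → γ k = 0)
    -- X = U^{A,C}(Z) is the state process: X_t = ∑_{j≥0} A^j C Z_{t-j}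
    (X : ℤ → Ω → (Fin N → ℝ))
    (hX : ∀ t ω, HasSum (fun j : ℕ => Z (t - (j : ℤ)) ω • ((A ^ j) *ᵥ C)) (X t ω))
    -- the state covariance matrix Γ_X is non-singular
    (hΓinv : IsUnit (Matrix.of fun i j : Fin N =>
      covv μ (fun ω => X 0 ω i) (fun ω => X 0 ω j)).det) :
    (Summable (fun k : ℕ => memCapZ μ Z X k) ∧
      ∑' k : ℕ, memCapZ μ Z X k = (N : ℝ)) ∧
    ∑' k : ℕ, foreCapZ μ Z X (k + 1) = 0 := by
  classical
  obtain ⟨c, hc0, hc1, hAc⟩ := hA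
  -- boundedness of the input
  obtain ⟨r, hr⟩ : ∃ r, D ⊆ Metric.closedBall (0 : ℝ) r :=
    hD.isBounded.subset_closedBall 0
  set M : ℝ := max r 0 with hMdef
  have hM0 : 0 ≤ M := le_max_right _ _
  have hZM : ∀ (t : ℤ) (ω : Ω), |Z t ω| ≤ M := by
    intro t ω
    have := hr (hZD t ω)
    rw [Metric.mem_closedBall, Real.dist_eq, sub_zero] at this
    exact le_trans this (le_max_left _ _)
  have hZm : ∀ t : ℤ, AEStronglyMeasurable (Z t) μ := fun t => (hZ2 t).1
  -- the vectors u j = A^j C and their bounds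
  set u : ℕ → Fin N → ℝ := fun j => (A ^ j) *ᵥ C with hudef
  have nrm_apply : ∀ (x : Fin N → ℝ) (i : Fin N),
      |x i| ≤ Real.sqrt (∑ i, x i ^ 2) := by
    intro x i
    rw [← Real.sqrt_sq_eq_abs]
    exact Real.sqrt_le_sqrt
      (Finset.single_le_sum (fun j _ => sq_nonneg (x j)) (Finset.mem_univ i))
  set K : ℝ := Real.sqrt (∑ i, C i ^ 2) with hKdef
  have hK0 : 0 ≤ K := Real.sqrt_nonneg _
  have hnrm : ∀ j : ℕ, Real.sqrt (∑ i, u j i ^ 2) ≤ c ^ j * K := by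
    intro j
    induction j with
    | zero => simp [hudef, Matrix.one_mulVec, hKdef]
    | succ n ih =>
      have h1 : u (n + 1) = A *ᵥ u n := by
        simp only [hudef]
        rw [pow_succ']
        rw [← Matrix.mulVec_mulVec]
      rw [h1]
      calc Real.sqrt (∑ i, (A *ᵥ u n) i ^ 2) ≤ c * Real.sqrt (∑ i, u n i ^ 2) :=
            hAc (u n)
        _ ≤ c * (c ^ n * K) := mul_le_mul_of_nonneg_left ih hc0
        _ = c ^ (n + 1) * K := by ring
  have hub : ∀ (j : ℕ) (i : Fin N), |u j i| ≤ c ^ j * K :=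
    fun j i => le_trans (nrm_apply (u j) i) (hnrm j)
  have hsumc : Summable (fun j : ℕ => c ^ j) := summable_geometric_of_lt_one hc0 hc1
  -- coordinatewise expansion of the state
  have hXs : ∀ (t : ℤ) (i : Fin N) (ω : Ω),
      HasSum (fun j : ℕ => Z (t - j) ω * u j i) (X t ω i) := by
    intro t i ω
    have h := (Pi.hasSum.1 (hX t ω)) i
    simpa [hudef] using h
  have hXm : ∀ (t : ℤ) (i : Fin N),
      AEStronglyMeasurable (fun ω => X t ω i) μ := by
    intro t i
    refine aestronglyMeasurable_of_tendsto_ae (f := fun n ω =>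
      ∑ j ∈ Finset.range n, Z (t - j) ω * u j i) Filter.atTop
      (fun n => (Finset.range n).aestronglyMeasurable_fun_sum
        (fun j _ => (hZm _).mul aestronglyMeasurable_const)) ?_
    filter_upwards with ω
    exact (hXs t i ω).tendsto_sum_nat
  -- bound for the state
  set B : ℝ := M * K * (1 - c)⁻¹ with hBdef
  have hB0 : 0 ≤ B := by
    have h1c : (0:ℝ) ≤ (1 - c)⁻¹ := le_of_lt (inv_pos.2 (by linarith))
    exact mul_nonneg (mul_nonneg hM0 hK0) h1c
  have hZub : ∀ (t : ℤ) (ω : Ω) (j : ℕ) (i : Fin N),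
      |Z (t - j) ω * u j i| ≤ M * K * c ^ j := by
    intro t ω j i
    rw [abs_mul]
    calc |Z (t - j) ω| * |u j i| ≤ M * (c ^ j * K) :=
          mul_le_mul (hZM _ _) (hub j i) (abs_nonneg _) hM0
      _ = M * K * c ^ j := by ring
  have hXb : ∀ (t : ℤ) (ω : Ω) (i : Fin N), |X t ω i| ≤ B := by
    intro t ω i
    have hgs : HasSum (fun j : ℕ => M * K * c ^ j) B :=
      (hasSum_geometric_of_lt_one hc0 hc1).mul_left (M * K)
    rw [← (hXs t i ω).tsum_eq, ← Real.norm_eq_abs]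
    exact tsum_of_norm_bounded hgs fun j => by
      rw [Real.norm_eq_abs]; exact hZub t ω j i
  -- integrability of bounded measurable functions
  have intb : ∀ (f : Ω → ℝ) (b : ℝ), AEStronglyMeasurable f μ →
      (∀ ω, |f ω| ≤ b) → Integrable f μ := by
    intro f b hm hb
    exact (memLp_top_of_bound hm b (Filter.Eventually.of_forall fun ω => by
      rw [Real.norm_eq_abs]; exact hb ω)).integrable le_top
  have iZ : ∀ s : ℤ, Integrable (Z s) μ := fun s => intb _ M (hZm s) (hZM s)
  have iX : ∀ (t : ℤ) (i : Fin N), Integrable (fun ω => X t ω i) μ :=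
    fun t i => intb _ B (hXm t i) (fun ω => hXb t ω i)
  have iZZ : ∀ s s' : ℤ, Integrable (fun ω => Z s ω * Z s' ω) μ := by
    intro s s'
    refine intb _ (M * M) ((hZm s).mul (hZm s')) fun ω => ?_
    rw [abs_mul]
    exact mul_le_mul (hZM s ω) (hZM s' ω) (abs_nonneg _) hM0
  have iZX : ∀ (s t : ℤ) (i : Fin N),
      Integrable (fun ω => Z s ω * X t ω i) μ := by
    intro s t i
    refine intb _ (M * B) ((hZm s).mul (hXm t i)) fun ω => ?_
    rw [abs_mul]
    exact mul_le_mul (hZM s ω) (hXb t ω i) (abs_nonneg _) hM0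
  have iXX : ∀ (t : ℤ) (i j : Fin N),
      Integrable (fun ω => X t ω i * X t ω j) μ := by
    intro t i j
    refine intb _ (B * B) ((hXm t i).mul (hXm t j)) fun ω => ?_
    rw [abs_mul]
    exact mul_le_mul (hXb t ω i) (hXb t ω j) (abs_nonneg _) hB0
  -- covariance of the input in terms of γ
  have base : ∀ (a : ℤ) (k : ℕ), (∫ ω, Z a ω * Z (a + k) ω ∂μ) = γ k := by
    intro a k
    have h := hγ a k
    simpa [covv, hZmean, sub_zero] using h
  have hcov : ∀ s t : ℤ, (∫ ω, Z s ω * Z t ω ∂μ) = γ (t - s).natAbs := by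
    intro s t
    rcases le_total s t with hst | hts
    · obtain ⟨k, rfl⟩ : ∃ k : ℕ, t = s + k := ⟨(t - s).toNat, by omega⟩
      have h2 : (s + (k : ℤ) - s).natAbs = k := by omega
      rw [h2]
      exact base s k
    · obtain ⟨k, rfl⟩ : ∃ k : ℕ, s = t + k := ⟨(s - t).toNat, by omega⟩
      have h2 : (t - (t + (k : ℤ))).natAbs = k := by omega
      rw [h2, show (∫ ω, Z (t + (k:ℤ)) ω * Z t ω ∂μ)
          = ∫ ω, Z t ω * Z (t + (k:ℤ)) ω ∂μ from by
        congr 1; funext ω; ring]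
      exact base t k
  -- swapping sums and integrals against the state process
  have hswap : ∀ (g : Ω → ℝ), AEStronglyMeasurable g μ → ∀ (Mg : ℝ), 0 ≤ Mg →
      (∀ ω, |g ω| ≤ Mg) → ∀ (t : ℤ) (i : Fin N),
      HasSum (fun m : ℕ => ∫ ω, g ω * (Z (t - m) ω * u m i) ∂μ)
        (∫ ω, g ω * X t ω i ∂μ) := by
    intro g hg Mg hMg0 hMg t i
    exact hasSum_integral_mul μ g hg Mg hMg0 hMg
      (fun m ω => Z (t - m) ω * u m i)
      (fun m => (hZm _).mul aestronglyMeasurable_const)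
      (fun m => M * K * c ^ m) (fun m => mul_nonneg (mul_nonneg hM0 hK0) (pow_nonneg hc0 m)) (hsumc.mul_left _)
      (fun m ω => hZub t ω m i) (fun ω => X t ω i) (fun ω => hXs t i ω)
  -- cross moments between the input and the state
  have hZX : ∀ (t : ℤ) (k : ℕ) (i : Fin N),
      (∫ ω, Z (t - k) ω * X t ω i ∂μ) = γ 0 * u k i := by
    intro t k i
    have h1 := hswap (Z (t - k)) (hZm _) M hM0 (hZM _) t i
    have h2 : ∀ m : ℕ, (∫ ω, Z (t - k) ω * (Z (t - m) ω * u m i) ∂μ)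
        = γ ((k : ℤ) - m).natAbs * u m i := by
      intro m
      simp_rw [← mul_assoc]
      rw [integral_mul_const, hcov (t - k) (t - m),
        show (t - (m:ℤ) - (t - k)).natAbs = ((k:ℤ) - m).natAbs from by omega]
    have h3 : HasSum (fun m : ℕ => ∫ ω, Z (t - k) ω * (Z (t - m) ω * u m i) ∂μ)
        (γ 0 * u k i) := by
      have hz : ∀ m : ℕ, m ≠ k →
          (∫ ω, Z (t - k) ω * (Z (t - m) ω * u m i) ∂μ) = 0 := by
        intro m hm
        rw [h2 m, hwn _ (by omega), zero_mul]
      have h4 := hasSum_single (f := fun m : ℕ =>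
        ∫ ω, Z (t - k) ω * (Z (t - m) ω * u m i) ∂μ) k hz
      simp only [h2 k, show ((k:ℤ) - k).natAbs = 0 from by omega] at h4
      exact h4
    exact h1.unique h3
  have hZX0 : ∀ (s t : ℤ), t < s → ∀ i : Fin N,
      (∫ ω, Z s ω * X t ω i ∂μ) = 0 := by
    intro s t hts i
    have h1 := hswap (Z s) (hZm s) M hM0 (hZM s) t i
    have h2 : ∀ m : ℕ, (∫ ω, Z s ω * (Z (t - m) ω * u m i) ∂μ) = 0 := by
      intro m
      simp_rw [← mul_assoc]
      rw [integral_mul_const, hcov s (t - m), hwn _ (by omega), zero_mul]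
    simp_rw [h2] at h1
    exact (hasSum_zero.unique h1).symm
  -- the state has zero mean
  have hXmean : ∀ (t : ℤ) (i : Fin N), (∫ ω, X t ω i ∂μ) = 0 := by
    intro t i
    have h1 := hswap (fun _ => (1:ℝ)) aestronglyMeasurable_const 1 zero_le_one
      (fun ω => by norm_num) t i
    simp only [one_mul] at h1
    have h2 : ∀ m : ℕ, (∫ ω, Z (t - m) ω * u m i ∂μ) = 0 := by
      intro m
      rw [integral_mul_const, show (∫ ω, Z (t - m) ω ∂μ) = 0 from hZmean (t - m),
        zero_mul]
    simp_rw [h2] at h1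
    exact (hasSum_zero.unique h1).symm
  -- second moments of the state
  have hXX : ∀ (t : ℤ) (i j : Fin N),
      HasSum (fun m : ℕ => γ 0 * (u m i * u m j)) (∫ ω, X t ω i * X t ω j ∂μ) := by
    intro t i j
    have h1 := hswap (fun ω => X t ω i) (hXm t i) B hB0 (fun ω => hXb t ω i) t j
    have h2 : ∀ m : ℕ, (∫ ω, X t ω i * (Z (t - m) ω * u m j) ∂μ)
        = γ 0 * (u m i * u m j) := by
      intro m
      simp_rw [← mul_assoc]
      rw [integral_mul_const,
        show (∫ ω, X t ω i * Z (t - m) ω ∂μ)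
          = ∫ ω, Z (t - m) ω * X t ω i ∂μ from by congr 1; funext ω; ring,
        hZX t m i]
    simp_rw [h2] at h1
    exact h1
  -- the state covariance matrix
  set G : Matrix (Fin N) (Fin N) ℝ := Matrix.of fun i j : Fin N =>
    covv μ (fun ω => X 0 ω i) (fun ω => X 0 ω j) with hGdef
  have hGint : ∀ i j : Fin N, G i j = ∫ ω, X 0 ω i * X 0 ω j ∂μ := by
    intro i j
    show covv μ (fun ω => X 0 ω i) (fun ω => X 0 ω j) = _
    simp only [covv, expv, hXmean 0 i, hXmean 0 j, sub_zero]
  have hGsum : ∀ i j : Fin N,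
      HasSum (fun m : ℕ => γ 0 * (u m i * u m j)) (G i j) := by
    intro i j
    rw [hGint i j]
    exact hXX 0 i j
  have hGt : ∀ (t : ℤ) (i j : Fin N), (∫ ω, X t ω i * X t ω j ∂μ) = G i j :=
    fun t i j => (hXX t i j).unique (hGsum i j)
  have hGsymm : ∀ i j : Fin N, G i j = G j i := by
    intro i j
    rw [hGint i j, hGint j i]
    congr 1; funext ω; ring
  have hdet : IsUnit G.det := hΓinv
  -- positivity facts about γ 0
  have hγ0 : covv μ (Z 0) (Z 0) = γ 0 := by simpa using hγ 0 0
  have hγ0nonneg : 0 ≤ γ 0 := by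
    rw [← show (∫ ω, Z 0 ω * Z 0 ω ∂μ) = γ 0 from by simpa using hcov 0 0]
    exact integral_nonneg fun ω => mul_self_nonneg _
  have hγ0ne : γ 0 ≠ 0 := by
    intro h0
    have hG0 : G = 0 := by
      ext i j
      have := hGsum i j
      rw [h0] at this
      simp only [zero_mul] at this
      exact (hasSum_zero.unique this).symm
    haveI : Nonempty (Fin N) := ⟨⟨0, hN⟩⟩
    rw [hG0, Matrix.det_zero] at hdet
    exact hdet.ne_zero rfl
  have hγ0pos : 0 < γ 0 := lt_of_le_of_ne hγ0nonneg (Ne.symm hγ0ne)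
  -- positive semidefiniteness of G
  have hpsd : ∀ W : Fin N → ℝ, 0 ≤ (G *ᵥ W) ⬝ᵥ W := by
    intro W
    have h1 : (∫ ω, (W ⬝ᵥ X 0 ω) ^ 2 ∂μ) = (G *ᵥ W) ⬝ᵥ W := by
      have expand : ∀ ω, (W ⬝ᵥ X 0 ω) ^ 2
          = ∑ i, ∑ j, (W i * W j) * (X 0 ω i * X 0 ω j) := by
        intro ω
        rw [sq, show W ⬝ᵥ X 0 ω = ∑ i, W i * X 0 ω i from rfl,
          Finset.sum_mul_sum]
        exact Finset.sum_congr rfl fun i _ => Finset.sum_congr rfl fun j _ => by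
          ring
      simp_rw [expand]
      rw [integral_finset_sum _ (fun i _ => integrable_finset_sum _
        (fun j _ => (iXX 0 i j).const_mul _))]
      rw [Finset.sum_congr rfl fun i _ =>
        integral_finset_sum _ (fun j _ => (iXX 0 i j).const_mul _)]
      simp_rw [integral_const_mul, hGt 0]
      show (∑ i, ∑ j, W i * W j * G i j) = ∑ i, (∑ j, G i j * W j) * W i
      exact Finset.sum_congr rfl fun i _ => by
        rw [Finset.sum_mul]
        exact Finset.sum_congr rfl fun j _ => by ring
    rw [← h1]
    exact integral_nonneg fun ω => sq_nonneg _
  -- expansion of the regression functional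
  have hQ : ∀ (s t : ℤ) (p : (Fin N → ℝ) × ℝ),
      (∫ ω, (Z s ω - p.1 ⬝ᵥ X t ω - p.2) ^ 2 ∂μ)
        = γ 0 - 2 * (p.1 ⬝ᵥ (fun i => ∫ ω, Z s ω * X t ω i ∂μ))
          + (G *ᵥ p.1) ⬝ᵥ p.1 + p.2 ^ 2 := by
    intro s t p
    obtain ⟨W, a⟩ := p
    have key : ∀ ω, (Z s ω - W ⬝ᵥ X t ω - a) ^ 2
        = Z s ω * Z s ω - 2 * (∑ i, W i * (Z s ω * X t ω i))
          - (2 * a) * Z s ω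
          + (∑ i, ∑ j, (W i * W j) * (X t ω i * X t ω j))
          + (2 * a) * (∑ i, W i * X t ω i) + a ^ 2 := by
      intro ω
      have e1 : Z s ω * (∑ i, W i * X t ω i) = ∑ i, W i * (Z s ω * X t ω i) := by
        rw [Finset.mul_sum]
        exact Finset.sum_congr rfl fun i _ => by ring
      have e2 : (∑ i, W i * X t ω i) * (∑ j, W j * X t ω j)
          = ∑ i, ∑ j, (W i * W j) * (X t ω i * X t ω j) := by
        rw [Finset.sum_mul_sum]
        exact Finset.sum_congr rfl fun i _ => Finset.sum_congr rfl fun j _ => by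
          ring
      rw [← e1, ← e2, show W ⬝ᵥ X t ω = ∑ i, W i * X t ω i from rfl]
      ring
    simp_rw [key]
    have i2 : Integrable (fun ω => ∑ i, W i * (Z s ω * X t ω i)) μ :=
      integrable_finset_sum _ (fun i _ => (iZX s t i).const_mul _)
    have i4 : Integrable
        (fun ω => ∑ i, ∑ j, (W i * W j) * (X t ω i * X t ω j)) μ :=
      integrable_finset_sum _ (fun i _ => integrable_finset_sum _
        (fun j _ => (iXX t i j).const_mul _))
    have i5 : Integrable (fun ω => ∑ i, W i * X t ω i) μ :=
      integrable_finset_sum _ (fun i _ => (iX t i).const_mul _)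
    have j7 : Integrable (fun ω => 2 * (∑ i, W i * (Z s ω * X t ω i))) μ :=
      i2.const_mul 2
    have j6 : Integrable (fun ω => (2 * a) * Z s ω) μ := (iZ s).const_mul (2 * a)
    have j5 : Integrable (fun ω => (2 * a) * (∑ i, W i * X t ω i)) μ :=
      i5.const_mul (2 * a)
    have j1 : Integrable (fun ω => Z s ω * Z s ω
        - 2 * (∑ i, W i * (Z s ω * X t ω i))) μ := (iZZ s s).sub j7
    have j2 : Integrable (fun ω => Z s ω * Z s ω
        - 2 * (∑ i, W i * (Z s ω * X t ω i)) - (2 * a) * Z s ω) μ := j1.sub j6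
    have j3 : Integrable (fun ω => Z s ω * Z s ω
        - 2 * (∑ i, W i * (Z s ω * X t ω i)) - (2 * a) * Z s ω
        + (∑ i, ∑ j, (W i * W j) * (X t ω i * X t ω j))) μ := j2.add i4
    have j4 : Integrable (fun ω => Z s ω * Z s ω
        - 2 * (∑ i, W i * (Z s ω * X t ω i)) - (2 * a) * Z s ω
        + (∑ i, ∑ j, (W i * W j) * (X t ω i * X t ω j))
        + (2 * a) * (∑ i, W i * X t ω i)) μ := j3.add j5
    rw [integral_add j4 (integrable_const _)]
    rw [integral_add j3 j5]
    rw [integral_add j2 i4]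
    rw [integral_sub j1 j6]
    rw [integral_sub (iZZ s s) j7]
    rw [integral_const_mul, integral_const_mul, integral_const_mul]
    rw [show (∫ ω, Z s ω * Z s ω ∂μ) = γ 0 from by simpa using hcov s s]
    rw [show (∫ ω, Z s ω ∂μ) = 0 from hZmean s]
    rw [integral_finset_sum _ (fun i _ => (iZX s t i).const_mul _)]
    rw [integral_finset_sum _ (fun i _ => (iX t i).const_mul _)]
    simp_rw [integral_const_mul, hXmean t, mul_zero, Finset.sum_const_zero]
    rw [integral_finset_sum _ (fun i _ => integrable_finset_sum _
      (fun j _ => (iXX t i j).const_mul _))]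
    rw [Finset.sum_congr rfl fun i _ =>
      integral_finset_sum _ (fun j _ => (iXX t i j).const_mul _)]
    simp_rw [integral_const_mul, hGt t]
    rw [integral_const]
    have hgw : (∑ i, ∑ j, W i * W j * G i j) = (G *ᵥ W) ⬝ᵥ W := by
      show _ = ∑ i, (∑ j, G i j * W j) * W i
      exact Finset.sum_congr rfl fun i _ => by
        rw [Finset.sum_mul]
        exact Finset.sum_congr rfl fun j _ => by ring
    have hwv : (∑ i, W i * (∫ ω, Z s ω * X t ω i ∂μ))
        = W ⬝ᵥ (fun i => ∫ ω, Z s ω * X t ω i ∂μ) := rfl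
    rw [hgw, hwv]
    simp [measure_univ]
  -- the memory capacities
  set T : ℕ → ℝ := fun k => γ 0 * ((G⁻¹ *ᵥ u k) ⬝ᵥ u k) with hTdef
  have hmem : ∀ k : ℕ, memCapZ μ Z X k = T k := by
    intro k
    have hvv : (fun i => ∫ ω, Z (-(k:ℤ)) ω * X 0 ω i ∂μ) = γ 0 • u k := by
      funext i
      rw [show (-(k:ℤ)) = 0 - k from by ring]
      exact hZX 0 k i
    have hw : G *ᵥ (G⁻¹ *ᵥ (γ 0 • u k)) = γ 0 • u k := by
      rw [Matrix.mulVec_mulVec, Matrix.mul_nonsing_inv G hdet, Matrix.one_mulVec]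
    have h5 : ∀ p : (Fin N → ℝ) × ℝ,
        (∫ ω, (Z (-(k:ℤ)) ω - p.1 ⬝ᵥ X 0 ω - p.2) ^ 2 ∂μ)
          = γ 0 - 2 * (p.1 ⬝ᵥ (γ 0 • u k)) + (G *ᵥ p.1) ⬝ᵥ p.1 + p.2 ^ 2 :=
      fun p => by rw [hQ (-(k:ℤ)) 0 p, hvv]
    have hiInf : (⨅ p : (Fin N → ℝ) × ℝ,
        ∫ ω, (Z (-(k:ℤ)) ω - p.1 ⬝ᵥ X 0 ω - p.2) ^ 2 ∂μ)
        = γ 0 - (G⁻¹ *ᵥ (γ 0 • u k)) ⬝ᵥ (γ 0 • u k) := by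
      simp_rw [h5]
      exact quad_inf G hGsymm hpsd (γ 0 • u k) (G⁻¹ *ᵥ (γ 0 • u k)) hw (γ 0)
    have hdot : (G⁻¹ *ᵥ (γ 0 • u k)) ⬝ᵥ (γ 0 • u k) = γ 0 * T k := by
      simp only [Matrix.mulVec_smul, smul_dotProduct,
        dotProduct_smul, smul_eq_mul, hTdef]
    simp only [memCapZ]
    rw [hiInf, hγ0, hdot, mul_sub, one_div, inv_mul_cancel₀ hγ0ne,
      ← mul_assoc, inv_mul_cancel₀ hγ0ne, one_mul]
    ring
  have hThasSum : HasSum T (N : ℝ) := by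
    have hTformula : T = fun k : ℕ =>
        ∑ i, ∑ j, G⁻¹ i j * (γ 0 * (u k j * u k i)) := by
      funext k
      show γ 0 * (∑ i, (∑ j, G⁻¹ i j * u k j) * u k i) = _
      rw [Finset.mul_sum]
      exact Finset.sum_congr rfl fun i _ => by
        rw [Finset.sum_mul, Finset.mul_sum]
        exact Finset.sum_congr rfl fun j _ => by ring
    have h2 : HasSum (fun k : ℕ => ∑ i, ∑ j, G⁻¹ i j * (γ 0 * (u k j * u k i)))
        (∑ i, ∑ j, G⁻¹ i j * G j i) :=
      hasSum_sum fun i _ => hasSum_sum fun j _ => (hGsum j i).mul_left _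
    have h3 : (∑ i, ∑ j, G⁻¹ i j * G j i) = (N : ℝ) := by
      have h4 : ∀ i : Fin N, (∑ j, G⁻¹ i j * G j i) = (G⁻¹ * G) i i :=
        fun i => (Matrix.mul_apply).symm
      simp_rw [h4, Matrix.nonsing_inv_mul G hdet, Matrix.one_apply_eq]
      simp
    rw [hTformula, ← h3]
    exact h2
  -- the forecasting capacities vanish
  have hfore : ∀ k : ℕ, foreCapZ μ Z X (k + 1) = 0 := by
    intro k
    have hvv : (fun i => ∫ ω, Z 0 ω * X (-((k + 1 : ℕ) : ℤ)) ω i ∂μ)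
        = (0 : Fin N → ℝ) := by
      funext i
      exact hZX0 0 _ (by push_cast; omega) i
    have hw : G *ᵥ (0 : Fin N → ℝ) = (0 : Fin N → ℝ) := Matrix.mulVec_zero G
    have h5 : ∀ p : (Fin N → ℝ) × ℝ,
        (∫ ω, (Z 0 ω - p.1 ⬝ᵥ X (-((k + 1 : ℕ) : ℤ)) ω - p.2) ^ 2 ∂μ)
          = γ 0 - 2 * (p.1 ⬝ᵥ (0 : Fin N → ℝ)) + (G *ᵥ p.1) ⬝ᵥ p.1 + p.2 ^ 2 :=
      fun p => by rw [hQ 0 (-((k + 1 : ℕ) : ℤ)) p, hvv]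
    have hiInf : (⨅ p : (Fin N → ℝ) × ℝ,
        ∫ ω, (Z 0 ω - p.1 ⬝ᵥ X (-((k + 1 : ℕ) : ℤ)) ω - p.2) ^ 2 ∂μ) = γ 0 := by
      simp_rw [h5]
      rw [quad_inf G hGsymm hpsd 0 0 hw (γ 0), zero_dotProduct, sub_zero]
    simp only [foreCapZ]
    rw [hiInf, hγ0, one_div, inv_mul_cancel₀ hγ0ne, sub_self]
  refine ⟨⟨?_, ?_⟩, ?_⟩
  · exact hThasSum.summable.congr fun k => (hmem k).symm
  · rw [tsum_congr hmem]
    exact hThasSum.tsum_eq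
  · rw [tsum_congr hfore]
    exact tsum_zero
end

section
/- Let A ∈ M_N(ℝ) with σ_max(A) < 1 be diagonalizable, with eigenvalues λ₁, …, λ_N and eigenvector basis {v₁, …, v_N}, and let C ∈ ℝ^N be written as C = ∑_{i=1}^N c_i v_i with all coefficients c_i ≠ 0. Then the matrix B := ∑_{j=0}^∞ A^j C C⊤ (A^j)⊤ (which for a white noise input Z with variance γ(0) equals Γ_X/γ(0), where Γ_X = Cov(X_t, X_t) is the covariance matrix of the state process X_t = ∑_{j≥0} A^j C Z_{t−j}) is non-singular if and only if the eigenvalues λ₁, …, λ_N are pairwise distinct. -/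
open Matrix

/- STATEMENT 12: for a diagonalizable A with σ_max(A) < 1 (expressed as A being
   a Euclidean contraction with constant c < 1) and C = ∑ c_i v_i with all
   c_i ≠ 0, the matrix B = ∑_{j≥0} A^j C Cᵀ (A^j)ᵀ (given entrywise by its
   convergent series) is non-singular iff the eigenvalues are pairwise
   distinct. -/
theorem stmt_12 {N : ℕ} (A : Matrix (Fin N) (Fin N) ℝ)
    (hA : ∃ c : ℝ, 0 ≤ c ∧ c < 1 ∧ ∀ x : Fin N → ℝ,
      Real.sqrt (∑ i, (A *ᵥ x) i ^ 2) ≤ c * Real.sqrt (∑ i, x i ^ 2))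
    (lam : Fin N → ℝ) (v : Module.Basis (Fin N) ℝ (Fin N → ℝ))
    (heig : ∀ i, A *ᵥ v i = lam i • v i)
    (C : Fin N → ℝ) (c : Fin N → ℝ)
    (hC : C = ∑ i, c i • v i) (hc : ∀ i, c i ≠ 0) :
    IsUnit (Matrix.of fun i j : Fin N =>
        ∑' k : ℕ, ((A ^ k) *ᵥ C) i * ((A ^ k) *ᵥ C) j).det ↔
      Function.Injective lam := by
  classical
  obtain ⟨r, hr0, hr1, hrA⟩ := hA
  set B : Matrix (Fin N) (Fin N) ℝ := Matrix.of fun i j : Fin N =>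
      ∑' k : ℕ, ((A ^ k) *ᵥ C) i * ((A ^ k) *ᵥ C) j with hBdef
  -- eigenvalue bound
  have hlam : ∀ m, |lam m| < 1 := by
    intro m
    have hv0 : v m ≠ 0 := v.ne_zero m
    obtain ⟨i0, hi0⟩ : ∃ i0, v m i0 ≠ 0 := by
      by_contra h; push_neg at h; exact hv0 (funext h)
    have hSpos : 0 < ∑ i, v m i ^ 2 :=
      Finset.sum_pos' (fun i _ => sq_nonneg _) ⟨i0, Finset.mem_univ _, by positivity⟩
    have h := hrA (v m)
    rw [heig m] at h
    have hL : Real.sqrt (∑ i, (lam m • v m) i ^ 2)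
        = |lam m| * Real.sqrt (∑ i, v m i ^ 2) := by
      rw [← Real.sqrt_sq_eq_abs, ← Real.sqrt_mul (sq_nonneg _)]
      congr 1
      rw [Finset.mul_sum]
      refine Finset.sum_congr rfl fun i _ => ?_
      simp only [Pi.smul_apply, smul_eq_mul]
      ring
    rw [hL] at h
    have hsq : 0 < Real.sqrt (∑ i, v m i ^ 2) := Real.sqrt_pos.mpr hSpos
    have hle : |lam m| ≤ r := le_of_mul_le_mul_right h hsq
    exact lt_of_le_of_lt hle hr1
  -- powers applied to C
  have hg : ∀ k : ℕ, (A ^ k) *ᵥ C = ∑ m, (c m * lam m ^ k) • v m := by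
    intro k
    have hvk : ∀ m, (A ^ k) *ᵥ v m = (lam m ^ k) • v m := by
      intro m
      induction k with
      | zero => simp
      | succ n ih =>
        rw [pow_succ', ← Matrix.mulVec_mulVec, ih, Matrix.mulVec_smul, heig m,
          smul_smul, ← pow_succ]
    calc (A ^ k) *ᵥ C = (A ^ k).mulVecLin (∑ m, c m • v m) := by
          rw [hC, Matrix.mulVecLin_apply]
      _ = ∑ m, c m • ((A ^ k) *ᵥ v m) := by
          rw [map_sum]
          simp only [Matrix.mulVecLin_apply, Matrix.mulVec_smul]
      _ = ∑ m, (c m * lam m ^ k) • v m := by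
          refine Finset.sum_congr rfl fun m _ => ?_
          rw [hvk m, smul_smul]
  have hgp : ∀ (k : ℕ) (i : Fin N), ((A ^ k) *ᵥ C) i = ∑ m, (c m * v m i) * lam m ^ k := by
    intro k i
    rw [hg k, Finset.sum_apply]
    refine Finset.sum_congr rfl fun m _ => ?_
    simp only [Pi.smul_apply, smul_eq_mul]
    ring
  -- summability
  have hgeo : ∀ m n : Fin N, Summable (fun k : ℕ => (lam m * lam n) ^ k) := by
    intro m n
    apply summable_geometric_of_abs_lt_one
    rw [abs_mul]
    nlinarith [abs_nonneg (lam m), abs_nonneg (lam n), hlam m, hlam n]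
  have hSum : ∀ u w : Fin N → ℝ,
      Summable (fun k : ℕ => (∑ m, u m * lam m ^ k) * (∑ m, w m * lam m ^ k)) := by
    intro u w
    have hE : (fun k : ℕ => (∑ m, u m * lam m ^ k) * (∑ m, w m * lam m ^ k))
        = fun k : ℕ => ∑ m, ∑ n, (u m * w n) * (lam m * lam n) ^ k := by
      funext k
      rw [Finset.sum_mul_sum]
      refine Finset.sum_congr rfl fun m _ => Finset.sum_congr rfl fun n _ => ?_
      rw [mul_pow]; ring
    rw [hE]
    exact summable_sum fun m _ => summable_sum fun n _ => ((hgeo m n).mul_left _)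
  have hS2 : ∀ i j : Fin N, Summable (fun k : ℕ => ((A ^ k) *ᵥ C) i * ((A ^ k) *ᵥ C) j) := by
    intro i j
    simpa only [hgp] using hSum (fun m => c m * v m i) (fun m => c m * v m j)
  -- dot product formula
  have hdot : ∀ (k : ℕ) (x : Fin N → ℝ),
      ((A ^ k) *ᵥ C) ⬝ᵥ x = ∑ m, (c m * (v m ⬝ᵥ x)) * lam m ^ k := by
    intro k x
    simp only [dotProduct, hgp, Finset.sum_mul, Finset.mul_sum]
    rw [Finset.sum_comm]
    refine Finset.sum_congr rfl fun m _ => Finset.sum_congr rfl fun l _ => ?_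
    ring
  have hSdx : ∀ (i : Fin N) (x : Fin N → ℝ),
      Summable (fun k : ℕ => ((A ^ k) *ᵥ C) i * (((A ^ k) *ᵥ C) ⬝ᵥ x)) := by
    intro i x
    have hE : (fun k : ℕ => ((A ^ k) *ᵥ C) i * (((A ^ k) *ᵥ C) ⬝ᵥ x))
        = fun k : ℕ => (∑ m, (c m * v m i) * lam m ^ k) *
            (∑ m, (c m * (v m ⬝ᵥ x)) * lam m ^ k) := by
      funext k; rw [hgp, hdot]
    rw [hE]
    exact hSum _ _
  -- mulVec formula
  have hBx : ∀ (x : Fin N → ℝ) (i : Fin N),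
      (B *ᵥ x) i = ∑' k : ℕ, ((A ^ k) *ᵥ C) i * (((A ^ k) *ᵥ C) ⬝ᵥ x) := by
    intro x i
    have h1 : (B *ᵥ x) i
        = ∑ j, (∑' k : ℕ, ((A ^ k) *ᵥ C) i * ((A ^ k) *ᵥ C) j) * x j := by
      simp [hBdef, Matrix.mulVec, dotProduct]
    rw [h1]
    have h2 : ∀ j, (∑' k : ℕ, ((A ^ k) *ᵥ C) i * ((A ^ k) *ᵥ C) j) * x j
        = ∑' k : ℕ, ((A ^ k) *ᵥ C) i * ((A ^ k) *ᵥ C) j * x j := by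
      intro j; rw [tsum_mul_right]
    simp only [h2]
    rw [← Summable.tsum_finsetSum (fun j _ => (hS2 i j).mul_right (x j))]
    refine tsum_congr fun k => ?_
    rw [dotProduct, Finset.mul_sum]
    exact Finset.sum_congr rfl fun j _ => by ring
  -- quadratic form
  have hquad : ∀ x : Fin N → ℝ,
      x ⬝ᵥ (B *ᵥ x) = ∑' k : ℕ, (((A ^ k) *ᵥ C) ⬝ᵥ x) ^ 2 := by
    intro x
    have h1 : x ⬝ᵥ (B *ᵥ x)
        = ∑ i, x i * ∑' k : ℕ, ((A ^ k) *ᵥ C) i * (((A ^ k) *ᵥ C) ⬝ᵥ x) := by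
      rw [dotProduct]
      exact Finset.sum_congr rfl fun i _ => by rw [hBx]
    rw [h1]
    have h2 : ∀ i, x i * (∑' k : ℕ, ((A ^ k) *ᵥ C) i * (((A ^ k) *ᵥ C) ⬝ᵥ x))
        = ∑' k : ℕ, x i * (((A ^ k) *ᵥ C) i * (((A ^ k) *ᵥ C) ⬝ᵥ x)) := by
      intro i; rw [tsum_mul_left]
    simp only [h2]
    rw [← Summable.tsum_finsetSum (fun i _ => ((hSdx i x).mul_left (x i)))]
    refine tsum_congr fun k => ?_
    have h3 : ∑ i, x i * (((A ^ k) *ᵥ C) i * (((A ^ k) *ᵥ C) ⬝ᵥ x))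
        = (∑ i, x i * ((A ^ k) *ᵥ C) i) * (((A ^ k) *ᵥ C) ⬝ᵥ x) := by
      rw [Finset.sum_mul]
      exact Finset.sum_congr rfl fun i _ => by ring
    rw [h3, sq]
    congr 1
    exact dotProduct_comm x _
  -- inverse matrix kernel helper
  have hker : ∀ (M : Matrix (Fin N) (Fin N) ℝ) (y : Fin N → ℝ),
      IsUnit M.det → M *ᵥ y = 0 → y = 0 := by
    intro M y hM h0
    exact Matrix.eq_zero_of_mulVec_eq_zero hM.ne_zero h0
  -- the basis matrix
  set V : Matrix (Fin N) (Fin N) ℝ := Matrix.of fun m l : Fin N => v m l with hVdef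
  have hVdet : IsUnit V.det := by
    have h1 : Invertible ((Pi.basisFun ℝ (Fin N)).toMatrix v) :=
      (Pi.basisFun ℝ (Fin N)).invertibleToMatrix v
    have h2 : (Pi.basisFun ℝ (Fin N)).toMatrix v = Vᵀ := by
      ext l m
      simp [Module.Basis.toMatrix_apply, Pi.basisFun_repr, hVdef]
    rw [h2] at h1
    have h3 : IsUnit Vᵀ.det := Matrix.isUnit_det_of_invertible _
    rwa [Matrix.det_transpose] at h3
  have hVx : ∀ x : Fin N → ℝ, V *ᵥ x = fun m => v m ⬝ᵥ x := by
    intro x; funext m; simp [hVdef, Matrix.mulVec, dotProduct]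
  -- orthogonality to all basis vectors forces zero
  have horth : ∀ x : Fin N → ℝ, (∀ m, v m ⬝ᵥ x = 0) → x = 0 := by
    intro x hx
    refine hker V x hVdet ?_
    rw [hVx]; funext m; exact hx m
  constructor
  · -- nonsingular → injective
    intro hB
    intro m n hmn
    by_contra hne
    -- build a kernel vector
    set e : Fin N → ℝ := fun p => if p = m then c n else if p = n then -(c m) else 0 with hedef
    obtain ⟨x, hx⟩ : ∃ x : Fin N → ℝ, V *ᵥ x = e := by
      refine ⟨V⁻¹ *ᵥ e, ?_⟩
      rw [Matrix.mulVec_mulVec, Matrix.mul_nonsing_inv V hVdet, Matrix.one_mulVec]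
    have hxne : x ≠ 0 := by
      intro h0
      rw [h0, Matrix.mulVec_zero] at hx
      have hem : e m = 0 := by rw [← hx]; rfl
      simp only [hedef, if_pos rfl] at hem
      exact hc n hem
    have hvx : ∀ p, v p ⬝ᵥ x = e p := by
      intro p
      have := congrFun hx p
      rwa [hVx] at this
    have hgx : ∀ k : ℕ, ((A ^ k) *ᵥ C) ⬝ᵥ x = 0 := by
      intro k
      rw [hdot k x]
      have hz : ∀ p ∈ Finset.univ, p ∉ ({m, n} : Finset (Fin N)) →
          (c p * (v p ⬝ᵥ x)) * lam p ^ k = 0 := by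
        intro p _ hp
        simp only [Finset.mem_insert, Finset.mem_singleton] at hp
        push_neg at hp
        rw [hvx p]
        simp [hedef, hp.1, hp.2]
      rw [← Finset.sum_subset (Finset.subset_univ ({m, n} : Finset (Fin N))) hz]
      rw [Finset.sum_pair hne]
      rw [hvx m, hvx n]
      simp only [hedef, if_pos rfl, if_neg hne, if_neg (Ne.symm hne), if_true]
      rw [hmn]; ring
    have hBx0 : B *ᵥ x = 0 := by
      funext i
      rw [hBx x i]
      simp only [hgx, mul_zero]
      exact tsum_zero
    exact hxne (hker B x hB hBx0)
  · -- injective → nonsingular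
    intro hinj
    have hposdef : B.PosDef := by
      rw [Matrix.posDef_iff_dotProduct_mulVec]
      constructor
      · show Bᴴ = B
        ext i j
        simp only [Matrix.conjTranspose_apply, hBdef, Matrix.of_apply, star_trivial]
        exact tsum_congr fun k => mul_comm _ _
      · intro x hx
        have hstar : (star x : Fin N → ℝ) = x := by
          funext i; exact star_trivial _
        rw [hstar, hquad x]
        -- find a nonzero term
        have hex : ∃ k : ℕ, ((A ^ k) *ᵥ C) ⬝ᵥ x ≠ 0 := by
          by_contra h
          push_neg at h
          have hy : (fun p => c p * (v p ⬝ᵥ x)) = 0 := by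
            apply Matrix.eq_zero_of_forall_pow_sum_mul_pow_eq_zero hinj
            intro i
            have := h (i : ℕ)
            rw [hdot] at this
            exact this
          have hvx0 : ∀ p, v p ⬝ᵥ x = 0 := by
            intro p
            have := congrFun hy p
            simp only [Pi.zero_apply] at this
            rcases mul_eq_zero.mp this with h' | h'
            · exact absurd h' (hc p)
            · exact h'
          exact hx (horth x hvx0)
        obtain ⟨k0, hk0⟩ := hex
        have hsml : Summable (fun k : ℕ => (((A ^ k) *ᵥ C) ⬝ᵥ x) ^ 2) := by
          have hE : (fun k : ℕ => (((A ^ k) *ᵥ C) ⬝ᵥ x) ^ 2)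
              = fun k : ℕ => (∑ p, (c p * (v p ⬝ᵥ x)) * lam p ^ k) *
                  (∑ p, (c p * (v p ⬝ᵥ x)) * lam p ^ k) := by
            funext k; rw [sq, hdot]
          rw [hE]
          exact hSum _ _
        exact Summable.tsum_pos hsml (fun k => sq_nonneg _) k0 (by positivity)
    have := hposdef.det_pos
    exact isUnit_iff_ne_zero.mpr (ne_of_gt this)
end

section
/- Let A ∈ M_N(ℝ) with σ_max(A) < 1, C ∈ ℝ^N, X := span{C, AC, …, A^{N−1}C} with r := dim X = rank R(A, C), and let ℝ^N = X ⊕ V be a direct sum decomposition with injection i_X and projection π_X. Define the reduced linear system on X by Ā := π_X A i_X and C̄ := π_X(C). Then the controllability matrices have equal rank: rank R(Ā, C̄) = rank R(A, C) = r (in particular the reduced pair (Ā, C̄) is controllable on X). Moreover, if Ā is diagonalizable with non-zero eigenvalues and the input Z is a strictly stationary white noise, then the covariance matrix Γ_X̄ := Cov(X̄_t, X̄_t) of the state process X̄ of the reduced system is invertible. -/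
open Matrix MeasureTheory

/-- The subspace X = span{C, AC, …, A^{N-1}C} ⊆ ℝ^N. -/
noncomputable def ctrlSpan {N : ℕ} (A : Matrix (Fin N) (Fin N) ℝ) (C : Fin N → ℝ) :
    Submodule ℝ (Fin N → ℝ) :=
  Submodule.span ℝ (Set.range fun j : Fin N => (A ^ (j : ℕ)) *ᵥ C)

/-- The controllability matrix R(A,C) = (C | AC | ⋯ | A^{N-1}C). -/
noncomputable def ctrlMat {N : ℕ} (A : Matrix (Fin N) (Fin N) ℝ) (C : Fin N → ℝ) :
    Matrix (Fin N) (Fin N) ℝ :=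
  Matrix.of fun i j : Fin N => ((A ^ (j : ℕ)) *ᵥ C) i

/-- The reduced connectivity map Ā = π_X ∘ A ∘ i_X on X = span{C, AC, …}. -/
noncomputable def redA {N : ℕ} (A : Matrix (Fin N) (Fin N) ℝ) (C : Fin N → ℝ)
    (V : Submodule ℝ (Fin N → ℝ)) (h : IsCompl (ctrlSpan A C) V) :
    ctrlSpan A C →ₗ[ℝ] ctrlSpan A C :=
  Submodule.linearProjOfIsCompl (ctrlSpan A C) V h ∘ₗ
    (A.mulVecLin ∘ₗ (ctrlSpan A C).subtype)

/-- The reduced input vector C̄ = π_X(C). -/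
noncomputable def redC {N : ℕ} (A : Matrix (Fin N) (Fin N) ℝ) (C : Fin N → ℝ)
    (V : Submodule ℝ (Fin N → ℝ)) (h : IsCompl (ctrlSpan A C) V) : ctrlSpan A C :=
  Submodule.linearProjOfIsCompl (ctrlSpan A C) V h C

section helpers
open Module

variable {N : ℕ} (A : Matrix (Fin N) (Fin N) ℝ) (C : Fin N → ℝ)
  (V : Submodule ℝ (Fin N → ℝ)) (h : IsCompl (ctrlSpan A C) V)

lemma stmt18_gen_mem (j : Fin N) : (A ^ (j : ℕ)) *ᵥ C ∈ ctrlSpan A C :=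
  Submodule.subset_span ⟨j, rfl⟩

lemma stmt18_sum_mulVec {ι : Type*} (s : Finset ι) (f : ι → Matrix (Fin N) (Fin N) ℝ)
    (v : Fin N → ℝ) : (∑ i ∈ s, f i) *ᵥ v = ∑ i ∈ s, f i *ᵥ v := by
  classical
  induction s using Finset.induction_on with
  | empty => simp
  | insert _ _ h ih => rw [Finset.sum_insert h, Finset.sum_insert h, Matrix.add_mulVec, ih]

lemma stmt18_powN_mem : (A ^ N) *ᵥ C ∈ ctrlSpan A C := by
  have h0 := Matrix.aeval_self_charpoly A
  rw [Polynomial.aeval_eq_sum_range, Matrix.charpoly_natDegree_eq_dim, Fintype.card_fin,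
    Finset.sum_range_succ] at h0
  have hcN : A.charpoly.coeff N = 1 := by
    have h1 := (Matrix.charpoly_monic A).coeff_natDegree
    rwa [Matrix.charpoly_natDegree_eq_dim, Fintype.card_fin] at h1
  rw [hcN, one_smul] at h0
  have hAN : A ^ N = -∑ i ∈ Finset.range N, A.charpoly.coeff i • A ^ i := by
    linear_combination (norm := abel) h0
  rw [hAN, Matrix.neg_mulVec, stmt18_sum_mulVec]
  refine neg_mem (Submodule.sum_mem _ fun i hi => ?_)
  rw [Matrix.smul_mulVec]
  exact Submodule.smul_mem _ _ (stmt18_gen_mem A C ⟨i, Finset.mem_range.mp hi⟩)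

lemma stmt18_map_mem {x : Fin N → ℝ} (hx : x ∈ ctrlSpan A C) : A *ᵥ x ∈ ctrlSpan A C := by
  induction hx using Submodule.span_induction with
  | mem x hx =>
    obtain ⟨j, rfl⟩ := hx
    have : A *ᵥ ((A ^ (j : ℕ)) *ᵥ C) = (A ^ ((j : ℕ) + 1)) *ᵥ C := by
      rw [Matrix.mulVec_mulVec, ← pow_succ']
    rw [this]
    by_cases hj : (j : ℕ) + 1 < N
    · exact stmt18_gen_mem A C ⟨(j : ℕ) + 1, hj⟩
    · have : (j : ℕ) + 1 = N := by omega
      rw [this]; exact stmt18_powN_mem A C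
  | zero => rw [Matrix.mulVec_zero]; exact zero_mem _
  | add x y hx hy ihx ihy => rw [Matrix.mulVec_add]; exact add_mem ihx ihy
  | smul a x hx ihx => rw [Matrix.mulVec_smul]; exact Submodule.smul_mem _ _ ihx

lemma stmt18_powk_mem (k : ℕ) : (A ^ k) *ᵥ C ∈ ctrlSpan A C := by
  induction k with
  | zero =>
    rw [pow_zero, Matrix.one_mulVec]
    by_cases hN : N = 0
    · subst hN
      have : C = 0 := Subsingleton.elim _ _
      rw [this]; exact zero_mem _
    · have := stmt18_gen_mem A C ⟨0, Nat.pos_of_ne_zero hN⟩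
      rwa [Fin.val_mk, pow_zero, Matrix.one_mulVec] at this
  | succ k ih =>
    have : (A ^ (k + 1)) *ᵥ C = A *ᵥ ((A ^ k) *ᵥ C) := by
      rw [Matrix.mulVec_mulVec, ← pow_succ']
    rw [this]
    exact stmt18_map_mem A C ih

/-- Krylov subspaces. -/
noncomputable def stmt18_Wk (k : ℕ) : Submodule ℝ (Fin N → ℝ) :=
  Submodule.span ℝ (Set.range fun j : Fin k => (A ^ (j : ℕ)) *ᵥ C)

lemma stmt18_Wk_mono (k : ℕ) : stmt18_Wk A C k ≤ stmt18_Wk A C (k + 1) := by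
  apply Submodule.span_mono
  rintro _ ⟨j, rfl⟩
  exact ⟨j.castSucc, rfl⟩

lemma stmt18_Wk_stab {k : ℕ} (h : stmt18_Wk A C (k + 1) ≤ stmt18_Wk A C k) (m : ℕ) :
    (A ^ m) *ᵥ C ∈ stmt18_Wk A C k := by
  have hmap : ∀ x ∈ stmt18_Wk A C k, A *ᵥ x ∈ stmt18_Wk A C k := by
    intro x hx
    induction hx using Submodule.span_induction with
    | mem x hx =>
      obtain ⟨j, rfl⟩ := hx
      have : A *ᵥ ((A ^ (j : ℕ)) *ᵥ C) = (A ^ ((j : ℕ) + 1)) *ᵥ C := by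
        rw [Matrix.mulVec_mulVec, ← pow_succ']
      rw [this]
      exact h (Submodule.subset_span ⟨⟨(j : ℕ) + 1, by omega⟩, rfl⟩)
    | zero => rw [Matrix.mulVec_zero]; exact zero_mem _
    | add x y hx hy ihx ihy => rw [Matrix.mulVec_add]; exact add_mem ihx ihy
    | smul a x hx ihx => rw [Matrix.mulVec_smul]; exact Submodule.smul_mem _ _ ihx
  induction m with
  | zero =>
    rw [pow_zero, Matrix.one_mulVec]
    have hC : C ∈ stmt18_Wk A C (k + 1) := by
      have : (A ^ ((⟨0, k.succ_pos⟩ : Fin (k+1)) : ℕ)) *ᵥ C ∈ stmt18_Wk A C (k + 1) :=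
        Submodule.subset_span ⟨_, rfl⟩
      simpa using this
    exact h hC
  | succ m ih =>
    have : (A ^ (m + 1)) *ᵥ C = A *ᵥ ((A ^ m) *ᵥ C) := by
      rw [Matrix.mulVec_mulVec, ← pow_succ']
    rw [this]
    exact hmap _ ih

lemma stmt18_K2 (k : ℕ) : ctrlSpan A C ≤ stmt18_Wk A C k ∨ k ≤ finrank ℝ (stmt18_Wk A C k) := by
  induction k with
  | zero => right; exact Nat.zero_le _
  | succ k ih =>
    rcases ih with hle | hk
    · exact Or.inl (hle.trans (stmt18_Wk_mono A C k))
    · by_cases heq : stmt18_Wk A C (k + 1) ≤ stmt18_Wk A C k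
      · left
        rw [ctrlSpan, Submodule.span_le]
        rintro _ ⟨j, rfl⟩
        exact stmt18_Wk_mono A C k (stmt18_Wk_stab A C heq (j : ℕ))
      · right
        have hlt : stmt18_Wk A C k < stmt18_Wk A C (k + 1) :=
          lt_of_le_of_ne (stmt18_Wk_mono A C k) fun h => heq h.ge
        have := Submodule.finrank_lt_finrank_of_lt hlt
        omega

lemma stmt18_K3 : stmt18_Wk A C (finrank ℝ (ctrlSpan A C)) = ctrlSpan A C := by
  set r := finrank ℝ (ctrlSpan A C) with hr
  have hle : stmt18_Wk A C r ≤ ctrlSpan A C := by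
    rw [stmt18_Wk, Submodule.span_le]
    rintro _ ⟨j, rfl⟩
    exact stmt18_powk_mem A C (j : ℕ)
  rcases stmt18_K2 A C r with h | h
  · exact le_antisymm hle h
  · exact Submodule.eq_of_le_of_finrank_le hle (hr ▸ h)

lemma stmt18_redC_coe : ((redC A C V h : ctrlSpan A C) : Fin N → ℝ) = C := by
  have hC : C ∈ ctrlSpan A C := by
    have := stmt18_powk_mem A C 0
    rwa [pow_zero, Matrix.one_mulVec] at this
  rw [redC]
  exact congrArg _ (Submodule.linearProjOfIsCompl_apply_left h ⟨C, hC⟩)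

lemma stmt18_redA_coe (x : ctrlSpan A C) :
    ((redA A C V h x : ctrlSpan A C) : Fin N → ℝ) = A *ᵥ (x : Fin N → ℝ) := by
  have hm : A *ᵥ (x : Fin N → ℝ) ∈ ctrlSpan A C := stmt18_map_mem A C x.2
  rw [redA]
  simp only [LinearMap.comp_apply, Submodule.subtype_apply, Matrix.mulVecLin_apply]
  exact congrArg _ (Submodule.linearProjOfIsCompl_apply_left h ⟨_, hm⟩)

lemma stmt18_pow_coe (k : ℕ) :
    (((redA A C V h ^ k) (redC A C V h) : ctrlSpan A C) : Fin N → ℝ) = (A ^ k) *ᵥ C := by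
  induction k with
  | zero => simpa using stmt18_redC_coe A C V h
  | succ k ih =>
    have h1 : (redA A C V h ^ (k + 1)) (redC A C V h)
        = redA A C V h ((redA A C V h ^ k) (redC A C V h)) := by
      rw [pow_succ']; rfl
    rw [h1, stmt18_redA_coe, ih, Matrix.mulVec_mulVec, ← pow_succ']
lemma stmt18_rank_eq : (ctrlMat A C).rank = finrank ℝ (ctrlSpan A C) := by
  rw [Matrix.rank_eq_finrank_span_cols]
  rfl

lemma stmt18_htop : Submodule.span ℝ (Set.range
      fun j : Fin (finrank ℝ (ctrlSpan A C)) => (redA A C V h ^ (j : ℕ)) (redC A C V h))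
    = (⊤ : Submodule ℝ (ctrlSpan A C)) := by
  apply Submodule.map_injective_of_injective (Submodule.injective_subtype (ctrlSpan A C))
  rw [Submodule.map_span, Submodule.map_subtype_top]
  have himg : (ctrlSpan A C).subtype '' Set.range
      (fun j : Fin (finrank ℝ (ctrlSpan A C)) => (redA A C V h ^ (j : ℕ)) (redC A C V h))
      = Set.range fun j : Fin (finrank ℝ (ctrlSpan A C)) => (A ^ (j : ℕ)) *ᵥ C := by
    rw [← Set.range_comp]
    exact congrArg _ (funext fun j => stmt18_pow_coe A C V h (j : ℕ))
  rw [himg]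
  exact stmt18_K3 A C
theorem stmt18_part2
    (hA : ∃ c : ℝ, 0 ≤ c ∧ c < 1 ∧ ∀ x : Fin N → ℝ,
      Real.sqrt (∑ i, (A *ᵥ x) i ^ 2) ≤ c * Real.sqrt (∑ i, x i ^ 2))
    (γ0 : ℝ) (hγ0 : 0 < γ0)
    (lam : Fin (Module.finrank ℝ (ctrlSpan A C)) → ℝ)
    (b : Basis (Fin (Module.finrank ℝ (ctrlSpan A C))) ℝ (ctrlSpan A C))
    (heig : ∀ i, (redA A C V h) (b i) = lam i • b i) :
    IsUnit (Matrix.of fun i j : Fin (Module.finrank ℝ (ctrlSpan A C)) =>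
        γ0 * ∑' k : ℕ,
          b.repr (((redA A C V h) ^ k) (redC A C V h)) i *
            b.repr (((redA A C V h) ^ k) (redC A C V h)) j).det := by
  obtain ⟨c, hc0, hc1, hcon⟩ := hA
  -- eigenvalue bound
  have hlam : ∀ i, |lam i| < 1 := by
    intro i
    have hAv : A *ᵥ ((b i : Fin N → ℝ)) = lam i • ((b i : Fin N → ℝ)) := by
      rw [← stmt18_redA_coe A C V h (b i), heig i, Submodule.coe_smul]
    have hb0 : ((b i : ctrlSpan A C) : Fin N → ℝ) ≠ 0 := by
      simpa [Submodule.coe_eq_zero] using b.ne_zero i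
    have hle := hcon (b i)
    rw [hAv] at hle
    have hs : ∀ j, (lam i • ((b i : ctrlSpan A C) : Fin N → ℝ)) j ^ 2
        = lam i ^ 2 * ((b i : ctrlSpan A C) : Fin N → ℝ) j ^ 2 := by
      intro j; simp only [Pi.smul_apply, smul_eq_mul]; ring
    rw [Finset.sum_congr rfl fun j _ => hs j, ← Finset.mul_sum,
      Real.sqrt_mul (sq_nonneg _), Real.sqrt_sq_eq_abs] at hle
    have hpos : 0 < Real.sqrt (∑ j, ((b i : ctrlSpan A C) : Fin N → ℝ) j ^ 2) := by
      rw [Real.sqrt_pos]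
      obtain ⟨j, hj⟩ := Function.ne_iff.mp hb0
      exact Finset.sum_pos' (fun j _ => sq_nonneg _)
        ⟨j, Finset.mem_univ j, sq_pos_of_ne_zero hj⟩
    have : |lam i| ≤ c := le_of_mul_le_mul_right (by linarith) hpos
    linarith
  -- coordinates of iterates
  have hw : ∀ (w : ctrlSpan A C) (i : Fin (Module.finrank ℝ (ctrlSpan A C))),
      b.repr (redA A C V h w) i = lam i * b.repr w i := by
    intro w i
    have hexp : redA A C V h w = ∑ j, (b.repr w j * lam j) • b j := by
      conv_lhs => rw [← b.sum_repr w]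
      rw [map_sum]
      refine Finset.sum_congr rfl fun j _ => ?_
      rw [_root_.map_smul, heig j, smul_smul]
    rw [hexp, map_sum]
    simp only [_root_.map_smul, Basis.repr_self, Finsupp.coe_finset_sum, Finset.sum_apply,
      Finsupp.smul_apply, Finsupp.single_apply, smul_eq_mul, mul_ite, mul_one, mul_zero]
    rw [Finset.sum_ite_eq' Finset.univ i fun j => b.repr w j * lam j]
    simp [mul_comm]
  have hrepr : ∀ (k : ℕ) (i : Fin (Module.finrank ℝ (ctrlSpan A C))),
      b.repr ((redA A C V h ^ k) (redC A C V h)) i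
        = lam i ^ k * b.repr (redC A C V h) i := by
    intro k
    induction k with
    | zero => intro i; simp
    | succ k ih =>
      intro i
      have h1 : (redA A C V h ^ (k + 1)) (redC A C V h)
          = redA A C V h ((redA A C V h ^ k) (redC A C V h)) := by rw [pow_succ']; rfl
      rw [h1, hw, ih]; ring
  -- summability
  have hsum2 : ∀ i j : Fin (Module.finrank ℝ (ctrlSpan A C)),
      Summable (fun k : ℕ => (lam i ^ k * b.repr (redC A C V h) i)
        * (lam j ^ k * b.repr (redC A C V h) j)) := by
    intro i j
    have hnorm : ‖lam i * lam j‖ < 1 := by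
      rw [Real.norm_eq_abs, abs_mul]
      nlinarith [hlam i, hlam j, abs_nonneg (lam i), abs_nonneg (lam j)]
    have := (summable_geometric_of_norm_lt_one hnorm).mul_left
      (b.repr (redC A C V h) i * b.repr (redC A C V h) j)
    refine this.congr fun k => ?_
    rw [mul_pow]; ring
  rw [isUnit_iff_ne_zero]
  intro hdet
  obtain ⟨x, hx0, hxv⟩ := Matrix.exists_mulVec_eq_zero_iff.mpr hdet
  set g : ℕ → ℝ := fun k => ∑ i, x i * (lam i ^ k * b.repr (redC A C V h) i) with hgdef
  have hg2 : ∀ k, g k ^ 2 = ∑ i, ∑ j, (x i * x j) * ((lam i ^ k * b.repr (redC A C V h) i)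
      * (lam j ^ k * b.repr (redC A C V h) j)) := by
    intro k
    rw [hgdef, sq, Finset.sum_mul_sum]
    refine Finset.sum_congr rfl fun i _ => Finset.sum_congr rfl fun j _ => by ring
  have hsumg : Summable (fun k => g k ^ 2) := by
    simp only [hg2]
    exact summable_sum fun i _ => summable_sum fun j _ => (hsum2 i j).mul_left _
  -- quadratic form identity
  have key : x ⬝ᵥ ((Matrix.of fun i j : Fin (Module.finrank ℝ (ctrlSpan A C)) =>
      γ0 * ∑' k : ℕ, b.repr ((redA A C V h ^ k) (redC A C V h)) i *
        b.repr ((redA A C V h ^ k) (redC A C V h)) j) *ᵥ x)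
      = γ0 * ∑' k, g k ^ 2 := by
    have hentry : ∀ i j : Fin (Module.finrank ℝ (ctrlSpan A C)), (γ0 * ∑' k : ℕ,
        b.repr ((redA A C V h ^ k) (redC A C V h)) i *
          b.repr ((redA A C V h ^ k) (redC A C V h)) j)
        = γ0 * ∑' k : ℕ, (lam i ^ k * b.repr (redC A C V h) i)
            * (lam j ^ k * b.repr (redC A C V h) j) := by
      intro i j
      simp only [hrepr]
    simp only [dotProduct, Matrix.mulVec, Matrix.of_apply, hentry]
    have hswap : ∀ i : Fin (Module.finrank ℝ (ctrlSpan A C)),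
        ∑ j, (γ0 * ∑' k : ℕ, (lam i ^ k * b.repr (redC A C V h) i)
            * (lam j ^ k * b.repr (redC A C V h) j)) * x j
        = ∑' k : ℕ, ∑ j, γ0 * (((lam i ^ k * b.repr (redC A C V h) i)
            * (lam j ^ k * b.repr (redC A C V h) j)) * x j) := by
      intro i
      have hstep : ∀ j : Fin (Module.finrank ℝ (ctrlSpan A C)),
          (γ0 * ∑' k : ℕ, (lam i ^ k * b.repr (redC A C V h) i)
            * (lam j ^ k * b.repr (redC A C V h) j)) * x j
          = ∑' k : ℕ, γ0 * (((lam i ^ k * b.repr (redC A C V h) i)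
            * (lam j ^ k * b.repr (redC A C V h) j)) * x j) := by
        intro j
        rw [← tsum_mul_left, ← tsum_mul_right]
        exact tsum_congr fun k => by ring
      rw [Finset.sum_congr rfl fun j _ => hstep j]
      exact (Summable.tsum_finsetSum fun j _ => ((hsum2 i j).mul_right (x j)).mul_left γ0).symm
    calc ∑ i, x i * ∑ j, (γ0 * ∑' k : ℕ, (lam i ^ k * b.repr (redC A C V h) i)
            * (lam j ^ k * b.repr (redC A C V h) j)) * x j
        = ∑ i, ∑' k : ℕ, x i * ∑ j, γ0 * (((lam i ^ k * b.repr (redC A C V h) i)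
            * (lam j ^ k * b.repr (redC A C V h) j)) * x j) := by
          refine Finset.sum_congr rfl fun i _ => ?_
          rw [hswap i, ← tsum_mul_left]
      _ = ∑' k : ℕ, ∑ i, x i * ∑ j, γ0 * (((lam i ^ k * b.repr (redC A C V h) i)
            * (lam j ^ k * b.repr (redC A C V h) j)) * x j) := by
          refine (Summable.tsum_finsetSum fun i _ => ?_).symm
          refine Summable.mul_left (x i) ?_
          refine summable_sum fun j _ => ?_
          exact (((hsum2 i j).mul_right (x j)).mul_left γ0)
      _ = γ0 * ∑' k, g k ^ 2 := by
          rw [← tsum_mul_left]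
          refine tsum_congr fun k => ?_
          rw [hg2 k, Finset.mul_sum]
          refine Finset.sum_congr rfl fun i _ => ?_
          rw [Finset.mul_sum, Finset.mul_sum]
          exact Finset.sum_congr rfl fun j _ => by ring
  rw [hxv, dotProduct_zero] at key
  have htsum0 : ∑' k, g k ^ 2 = 0 := by
    rcases mul_eq_zero.mp key.symm with h' | h'
    · exact absurd h' (ne_of_gt hγ0)
    · exact h'
  have hgk : ∀ k, g k = 0 := by
    intro k
    have hle' : g k ^ 2 ≤ 0 := htsum0 ▸ Summable.le_tsum hsumg k fun j _ => sq_nonneg _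
    have := le_antisymm hle' (sq_nonneg _)
    exact pow_eq_zero_iff (n := 2) (by norm_num) |>.mp this
  -- x = 0 contradiction
  apply hx0
  funext j0
  have hψ : ∀ v : ctrlSpan A C, v ∈ Submodule.span ℝ (Set.range
      fun j : Fin (Module.finrank ℝ (ctrlSpan A C)) =>
        (redA A C V h ^ (j : ℕ)) (redC A C V h)) →
      ∑ i, x i * b.repr v i = 0 := by
    intro v hv
    induction hv using Submodule.span_induction with
    | mem v hv =>
      obtain ⟨j, rfl⟩ := hv
      simp only [hrepr]
      exact hgk (j : ℕ)
    | zero => simp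
    | add u v hu hv ihu ihv =>
      rw [map_add]
      simp only [Finsupp.add_apply, mul_add, Finset.sum_add_distrib, ihu, ihv, add_zero]
    | smul a v hv ihv =>
      rw [_root_.map_smul]
      simp only [Finsupp.smul_apply, smul_eq_mul]
      rw [show ∑ i, x i * (a * b.repr v i) = a * ∑ i, x i * b.repr v i by
        rw [Finset.mul_sum]; exact Finset.sum_congr rfl fun i _ => by ring, ihv, mul_zero]
  have := hψ (b j0) (by rw [stmt18_htop A C V h]; trivial)
  simpa [Basis.repr_self, Finsupp.single_apply] using this
end helpers

/- STATEMENT 18: the reduced pair (Ā, C̄) on X = span{C, AC, …, A^{N-1}C}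
   (ℝ^N = X ⊕ V, r = dim X = rank R(A,C)) has a controllability matrix of the
   same rank r; moreover, if Ā is diagonalizable with non-zero eigenvalues and
   the input is a strictly stationary white noise (with variance γ0 > 0), then
   the state covariance matrix Γ_X̄ = γ0 ∑_{j≥0} Ā^j C̄ C̄ᵀ (Ā^j)ᵀ of the reduced
   system (expressed entrywise in the eigenvector basis b) is invertible.
   σ_max(A) < 1 is expressed as a Euclidean contraction bound. -/
theorem stmt_18 {N : ℕ} (A : Matrix (Fin N) (Fin N) ℝ) (C : Fin N → ℝ)
    (hA : ∃ c : ℝ, 0 ≤ c ∧ c < 1 ∧ ∀ x : Fin N → ℝ,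
      Real.sqrt (∑ i, (A *ᵥ x) i ^ 2) ≤ c * Real.sqrt (∑ i, x i ^ 2))
    (V : Submodule ℝ (Fin N → ℝ)) (hcompl : IsCompl (ctrlSpan A C) V)
    -- a strictly stationary white noise input Z with variance γ0 > 0
    {Ω : Type*} [MeasurableSpace Ω] (μ : Measure Ω) [IsProbabilityMeasure μ]
    (Z : ℤ → Ω → ℝ) (hZ2 : ∀ t, MemLp (Z t) 2 μ)
    (hstat : ∀ τ : ℤ, Measure.map (fun ω => fun t : ℤ => Z (t + τ) ω) μ =
      Measure.map (fun ω => fun t : ℤ => Z t ω) μ)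
    (hmean : ∀ t, expv μ (Z t) = 0)
    (hwn : ∀ s t : ℤ, s ≠ t → covv μ (Z s) (Z t) = 0)
    (γ0 : ℝ) (hvar : ∀ t, covv μ (Z t) (Z t) = γ0) (hγ0 : 0 < γ0) :
    -- rank R(Ā, C̄) = rank R(A, C) = r := dim X
    (Module.finrank ℝ
        (Submodule.span ℝ (Set.range
          fun j : Fin (Module.finrank ℝ (ctrlSpan A C)) =>
            ((redA A C V hcompl) ^ (j : ℕ)) (redC A C V hcompl))) =
      (ctrlMat A C).rank ∧
      (ctrlMat A C).rank = Module.finrank ℝ (ctrlSpan A C)) ∧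
    -- if Ā is diagonalizable with non-zero eigenvalues, Γ_X̄ is invertible
    (∀ (lam : Fin (Module.finrank ℝ (ctrlSpan A C)) → ℝ)
        (b : Module.Basis (Fin (Module.finrank ℝ (ctrlSpan A C))) ℝ (ctrlSpan A C)),
      (∀ i, (redA A C V hcompl) (b i) = lam i • b i) → (∀ i, lam i ≠ 0) →
      IsUnit (Matrix.of fun i j : Fin (Module.finrank ℝ (ctrlSpan A C)) =>
          γ0 * ∑' k : ℕ,
            b.repr (((redA A C V hcompl) ^ k) (redC A C V hcompl)) i *
              b.repr (((redA A C V hcompl) ^ k) (redC A C V hcompl)) j).det) := by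
  refine ⟨⟨?_, stmt18_rank_eq A C⟩, ?_⟩
  · rw [stmt18_htop A C V hcompl, finrank_top]
    exact (stmt18_rank_eq A C).symm
  · intro lam b heig _
    exact stmt18_part2 A C V hcompl hA γ0 hγ0 lam b heig
end

section
/- Consider the linear state system F(x, z) := Ax + Cz with A ∈ M_N(ℝ), σ_max(A) < 1, C ∈ ℝ^N, and let the input process Z : Ω → D^ℤ (D ⊂ ℝ compact) be a strictly stationary white noise with variance γ(0) > 0. Let X := span{C, AC, …, A^{N−1}C}, ℝ^N = X ⊕ V a direct sum decomposition, and Ā := π_X A i_X the induced map on X. If Ā is diagonalizable with non-zero eigenvalues, then the total memory capacity and the total forecasting capacity of F with respect to Z are MC = rank R(A, C) = dim span{C, AC, …, A^{N−1}C} and FC = 0. -/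
open Matrix MeasureTheory Module Filter

/- STATEMENT 19: for a linear recurrent network F(x,z) = Ax + Cz (σ_max(A) < 1,
   expressed as a Euclidean contraction bound) driven by a strictly stationary
   white noise with variance γ(0) > 0, if the reduced map Ā = π_X A i_X on
   X = span{C, AC, …, A^{N-1}C} is diagonalizable with non-zero eigenvalues,
   then MC = rank R(A,C) = dim span{C, AC, …, A^{N-1}C} and FC = 0. -/

set_option maxHeartbeats 1600000

local notation "⟪" x ", " y "⟫" => @inner ℝ _ _ x y

/-- squares of an abs-summable sequence are summable -/
lemma sq_summable_of_abs_summable {c : ℕ → ℝ} (hc : Summable fun j => |c j|) :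
    Summable fun j => (c j) ^ 2 := by
  have hC0 : ∀ j, |c j| ≤ ∑' i, |c i| := fun j => Summable.le_tsum hc j fun i _ => abs_nonneg _
  refine Summable.of_nonneg_of_le (fun j => sq_nonneg _) (fun j => ?_)
    (hc.mul_left (∑' i, |c i|))
  calc (c j) ^ 2 = |c j| * |c j| := by rw [sq]; exact (abs_mul_abs_self _).symm
    _ ≤ (∑' i, |c i|) * |c j| := mul_le_mul_of_nonneg_right (hC0 j) (abs_nonneg _)

lemma summable_mul_of_sq_summable {a b : ℕ → ℝ} (ha : Summable fun j => (a j) ^ 2)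
    (hb : Summable fun j => (b j) ^ 2) : Summable fun j => a j * b j := by
  refine Summable.of_norm_bounded
    ((ha.add hb).div_const 2) (fun j => ?_)
  rw [Real.norm_eq_abs, abs_mul]
  nlinarith [sq_nonneg (|a j| - |b j|), sq_abs (a j), sq_abs (b j), abs_nonneg (a j),
    abs_nonneg (b j)]

lemma mem_ctrlSpan_pow {N : ℕ} (A : Matrix (Fin N) (Fin N) ℝ) (C : Fin N → ℝ) (m : ℕ) :
    (A ^ m) *ᵥ C ∈ ctrlSpan A C := by
  rcases Nat.eq_zero_or_pos N with hN | hN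
  · subst hN
    have h0 : (A ^ m) *ᵥ C = 0 := by funext i; exact i.elim0
    rw [h0]; exact Submodule.zero_mem _
  set r := Polynomial.X ^ m %ₘ A.charpoly with hr
  have hdeg : r.degree < (N : WithBot ℕ) := by
    have := Polynomial.degree_modByMonic_lt (Polynomial.X ^ m) (Matrix.charpoly_monic A)
    rwa [Matrix.charpoly_degree_eq_dim, Fintype.card_fin] at this
  have hnat : r.natDegree < N := by
    rcases eq_or_ne r 0 with h0 | h0
    · simpa [h0] using hN
    · exact (Polynomial.natDegree_lt_iff_degree_lt h0).mpr (by exact_mod_cast hdeg)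
  have hpow := Matrix.pow_eq_aeval_mod_charpoly A m
  have haev : (Polynomial.aeval A) r = ∑ i ∈ Finset.range N, r.coeff i • A ^ i := by
    rw [Polynomial.aeval_eq_sum_range' hnat]
  rw [hpow, ← hr, haev]
  have hsum : (∑ i ∈ Finset.range N, r.coeff i • A ^ i) *ᵥ C
      = ∑ i ∈ Finset.range N, r.coeff i • ((A ^ i) *ᵥ C) := by
    funext i
    simp [Matrix.mulVec, dotProduct, Matrix.sum_apply, Finset.sum_mul]
    rw [Finset.sum_comm]
    refine Finset.sum_congr rfl fun j _ => ?_
    rw [Finset.mul_sum]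
    exact Finset.sum_congr rfl fun l _ => by ring
  rw [hsum]
  refine Submodule.sum_mem _ fun i hi => Submodule.smul_mem _ _ ?_
  exact Submodule.subset_span ⟨⟨i, Finset.mem_range.mp hi⟩, rfl⟩

lemma span_range_pow_eq {N : ℕ} (A : Matrix (Fin N) (Fin N) ℝ) (C : Fin N → ℝ) :
    Submodule.span ℝ (Set.range fun j : ℕ => (A ^ j) *ᵥ C) = ctrlSpan A C := by
  apply le_antisymm
  · rw [Submodule.span_le]
    rintro x ⟨j, rfl⟩
    exact mem_ctrlSpan_pow A C j
  · rw [ctrlSpan, Submodule.span_le]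
    rintro x ⟨j, rfl⟩
    exact Submodule.subset_span ⟨(j : ℕ), rfl⟩

lemma rank_ctrlMat {N : ℕ} (A : Matrix (Fin N) (Fin N) ℝ) (C : Fin N → ℝ) :
    (ctrlMat A C).rank = Module.finrank ℝ (ctrlSpan A C) := by
  rw [Matrix.rank_eq_finrank_span_cols, ctrlSpan]
  congr 2

noncomputable def dotCLM {N : ℕ} (u : Fin N → ℝ) : (Fin N → ℝ) →L[ℝ] ℝ :=
  LinearMap.toContinuousLinearMap
    { toFun := fun x => u ⬝ᵥ x
      map_add' := fun x y => dotProduct_add u x y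
      map_smul' := fun r x => by simp [dotProduct_smul] }

@[simp] lemma dotCLM_apply {N : ℕ} (u x : Fin N → ℝ) : dotCLM u x = u ⬝ᵥ x := rfl


lemma dot_main {N : ℕ} (v : ℕ → (Fin N → ℝ)) (K c : ℝ) (hc0 : 0 ≤ c) (hc1 : c < 1)
    (hK : ∀ j, Real.sqrt (∑ i, v j i ^ 2) ≤ K * c ^ j) :
    ∃ u : ℕ → (Fin N → ℝ),
      (∀ k, HasSum (fun j => (u k ⬝ᵥ v j) • v j) (v k)) ∧
      Summable (fun k => u k ⬝ᵥ v k) ∧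
      ∑' k, u k ⬝ᵥ v k = (Module.finrank ℝ (Submodule.span ℝ (Set.range v)) : ℝ) := by
  classical
  set L : EuclideanSpace ℝ (Fin N) ≃L[ℝ] (Fin N → ℝ) :=
    PiLp.continuousLinearEquiv 2 ℝ (fun _ : Fin N => ℝ) with hL
  set w : ℕ → EuclideanSpace ℝ (Fin N) := fun j => L.symm (v j) with hw
  have hLw : ∀ j, L (w j) = v j := fun j => L.apply_symm_apply (v j)
  have hdot : ∀ (x y : EuclideanSpace ℝ (Fin N)), (L x) ⬝ᵥ (L y) = ⟪x, y⟫ := by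
    intro x y
    simp only [PiLp.inner_apply, RCLike.inner_apply, starRingEnd_apply, star_trivial]
    exact Finset.sum_congr rfl fun i _ => mul_comm _ _
  have hnorm : ∀ j, ‖w j‖ ≤ K * c ^ j := by
    intro j
    have he : ‖w j‖ = Real.sqrt (∑ i, v j i ^ 2) := by
      rw [hw, EuclideanSpace.norm_eq]
      congr 1
      refine Finset.sum_congr rfl fun i _ => ?_
      rw [Real.norm_eq_abs, sq_abs]
      rfl
    rw [he]; exact hK j
  have hKnn : 0 ≤ K := by
    have h0 := (Real.sqrt_nonneg _).trans (hK 0)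
    simpa using h0
  have hgeo : Summable (fun j : ℕ => c ^ j) := summable_geometric_of_lt_one hc0 hc1
  have hw2 : ∀ j, ‖w j‖ * ‖w j‖ ≤ (K * K) * c ^ j := by
    intro j
    have hcj : c ^ j ≤ 1 := pow_le_one₀ hc0 hc1.le
    calc ‖w j‖ * ‖w j‖ ≤ (K * c ^ j) * (K * c ^ j) :=
          mul_le_mul (hnorm j) (hnorm j) (norm_nonneg _) (by positivity)
      _ = (K * K) * (c ^ j * c ^ j) := by ring
      _ ≤ (K * K) * (c ^ j * 1) :=
          mul_le_mul_of_nonneg_left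
            (mul_le_mul_of_nonneg_left hcj (by positivity)) (by positivity)
      _ = (K * K) * c ^ j := by ring
  have hib : ∀ (x y : EuclideanSpace ℝ (Fin N)), ∀ j : ℕ,
      ‖⟪w j, x⟫ * ⟪w j, y⟫‖ ≤ (K * K * (‖x‖ * ‖y‖)) * c ^ j := by
    intro x y j
    calc ‖⟪w j, x⟫ * ⟪w j, y⟫‖ = ‖⟪w j, x⟫‖ * ‖⟪w j, y⟫‖ := norm_mul _ _
      _ ≤ (‖w j‖ * ‖x‖) * (‖w j‖ * ‖y‖) :=
          mul_le_mul (norm_inner_le_norm _ _) (norm_inner_le_norm _ _)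
            (norm_nonneg _) (by positivity)
      _ = (‖w j‖ * ‖w j‖) * (‖x‖ * ‖y‖) := by ring
      _ ≤ ((K * K) * c ^ j) * (‖x‖ * ‖y‖) :=
          mul_le_mul_of_nonneg_right (hw2 j) (by positivity)
      _ = (K * K * (‖x‖ * ‖y‖)) * c ^ j := by ring
  have hsummul : ∀ (x y : EuclideanSpace ℝ (Fin N)),
      Summable (fun j => ⟪w j, x⟫ * ⟪w j, y⟫) :=
    fun x y => Summable.of_norm_bounded
      (hgeo.mul_left (K * K * (‖x‖ * ‖y‖))) (hib x y)
  have hsumv : ∀ (x : EuclideanSpace ℝ (Fin N)), Summable (fun j => ⟪w j, x⟫ • w j) := by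
    intro x
    apply Summable.of_norm_bounded (hgeo.mul_left (K * K * ‖x‖))
    intro j
    rw [norm_smul]
    calc ‖⟪w j, x⟫‖ * ‖w j‖ ≤ (‖w j‖ * ‖x‖) * ‖w j‖ :=
          mul_le_mul_of_nonneg_right (norm_inner_le_norm _ _) (norm_nonneg _)
      _ = (‖w j‖ * ‖w j‖) * ‖x‖ := by ring
      _ ≤ ((K * K) * c ^ j) * ‖x‖ :=
          mul_le_mul_of_nonneg_right (hw2 j) (norm_nonneg _)
      _ = (K * K * ‖x‖) * c ^ j := by ring
  set T : EuclideanSpace ℝ (Fin N) →ₗ[ℝ] EuclideanSpace ℝ (Fin N) :=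
    { toFun := fun x => ∑' j, ⟪w j, x⟫ • w j
      map_add' := by
        intro x y
        show (∑' j, ⟪w j, x + y⟫ • w j) = (∑' j, ⟪w j, x⟫ • w j) + (∑' j, ⟪w j, y⟫ • w j)
        rw [← Summable.tsum_add (hsumv x) (hsumv y)]
        apply tsum_congr
        intro j
        rw [inner_add_right, add_smul]
      map_smul' := by
        intro r x
        show (∑' j, ⟪w j, r • x⟫ • w j) = r • (∑' j, ⟪w j, x⟫ • w j)
        rw [← Summable.tsum_const_smul r (hsumv x)]
        apply tsum_congr
        intro j
        rw [real_inner_smul_right]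
        exact mul_smul _ _ _ } with hT
  have hTapp : ∀ x, T x = ∑' j, ⟪w j, x⟫ • w j := fun _ => rfl
  have hTinner : ∀ x y, ⟪y, T x⟫ = ∑' j, ⟪w j, x⟫ * ⟪w j, y⟫ := by
    intro x y
    have h2 := ((hsumv x).hasSum.mapL (innerSL ℝ y)).tsum_eq
    simp only [innerSL_apply_apply] at h2
    rw [hTapp, ← h2]
    apply tsum_congr
    intro j
    rw [real_inner_smul_right, real_inner_comm y (w j)]
  have hsym : ∀ x y, ⟪y, T x⟫ = ⟪x, T y⟫ := by
    intro x y
    rw [hTinner, hTinner]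
    exact tsum_congr fun j => mul_comm _ _
  set S : Submodule ℝ (EuclideanSpace ℝ (Fin N)) := Submodule.span ℝ (Set.range w) with hS
  have hTS : ∀ x, T x ∈ S := by
    intro x
    have hcl : IsClosed (S : Set (EuclideanSpace ℝ (Fin N))) := S.closed_of_finiteDimensional
    refine hcl.mem_of_tendsto ((hsumv x).hasSum).tendsto_sum_nat
      (Filter.Eventually.of_forall fun n => ?_)
    exact Submodule.sum_mem _ fun j _ => Submodule.smul_mem _ _
      (Submodule.subset_span ⟨j, rfl⟩)
  have hker1 : ∀ x, T x = 0 → ∀ j, ⟪w j, x⟫ = 0 := by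
    intro x hx j
    have h0 : ∑' j, ⟪w j, x⟫ * ⟪w j, x⟫ = 0 := by
      rw [← hTinner x x, hx, inner_zero_right]
    have hle := Summable.le_tsum (hsummul x x) j (fun i _ => mul_self_nonneg _)
    rw [h0] at hle
    exact mul_self_eq_zero.mp (le_antisymm hle (mul_self_nonneg _))
  have hker : LinearMap.ker T = Sᗮ := by
    ext x
    constructor
    · intro hx
      rw [Submodule.mem_orthogonal]
      intro z hz
      induction hz using Submodule.span_induction with
      | mem z hzm =>
          obtain ⟨j, rfl⟩ := hzm
          exact hker1 x (LinearMap.mem_ker.mp hx) j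
      | zero => exact inner_zero_left x
      | add a b _ _ ha hb => rw [inner_add_left, ha, hb, add_zero]
      | smul r a _ ha => rw [real_inner_smul_left, ha, mul_zero]
    · intro hx
      rw [LinearMap.mem_ker, hTapp]
      have hz : ∀ j, ⟪w j, x⟫ = 0 := by
        intro j
        rw [Submodule.mem_orthogonal] at hx
        exact hx (w j) (Submodule.subset_span ⟨j, rfl⟩)
      simp [hz]
  have hrange : LinearMap.range T = S := by
    have hle : LinearMap.range T ≤ S := by
      rintro y ⟨x, rfl⟩; exact hTS x
    refine Submodule.eq_of_le_of_finrank_le hle ?_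
    have h1 := LinearMap.finrank_range_add_finrank_ker T
    have h2 := Submodule.finrank_add_finrank_orthogonal (K := S)
    rw [hker] at h1
    have h3 : finrank ℝ (EuclideanSpace ℝ (Fin N)) = finrank ℝ (Fin N → ℝ) := by
      rw [finrank_euclideanSpace, finrank_pi]
    omega
  set G : S →ₗ[ℝ] S := T.restrict (fun x _ => hTS x) with hG
  have hGcoe : ∀ s : S, (G s : EuclideanSpace ℝ (Fin N)) = T s := fun s => rfl
  have hGinj : Function.Injective G := by
    rw [← LinearMap.ker_eq_bot, Submodule.eq_bot_iff]
    rintro ⟨x, hxS⟩ hx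
    have hTx : T x = 0 := by
      have h := congrArg Subtype.val (LinearMap.mem_ker.mp hx)
      simpa [hGcoe] using h
    have hxperp : x ∈ Sᗮ := hker ▸ LinearMap.mem_ker.mpr hTx
    have hx0 : x = 0 := Submodule.disjoint_def.mp (Submodule.orthogonal_disjoint S) x hxS hxperp
    exact Subtype.ext hx0
  have hGsurj : Function.Surjective G := (LinearMap.injective_iff_surjective).mp hGinj
  set Geq : S ≃ₗ[ℝ] S := LinearEquiv.ofBijective G ⟨hGinj, hGsurj⟩ with hGeq
  have hGeqapp : ∀ s : S, Geq s = G s := fun s => rfl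
  have hvS : ∀ k, w k ∈ S := fun k => Submodule.subset_span ⟨k, rfl⟩
  set vS : ℕ → S := fun k => ⟨w k, hvS k⟩ with hvs
  set uS : ℕ → S := fun k => Geq.symm (vS k) with hus
  set u : ℕ → (Fin N → ℝ) := fun k => L ((uS k : EuclideanSpace ℝ (Fin N))) with hu
  have hTu : ∀ k, T ((uS k : EuclideanSpace ℝ (Fin N))) = w k := by
    intro k
    have h1 : Geq (uS k) = vS k := Geq.apply_symm_apply (vS k)
    have h2 : G (uS k) = vS k := by rw [← hGeqapp]; exact h1
    have := congrArg Subtype.val h2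
    rw [hGcoe] at this
    exact this
  have hudot : ∀ k j, u k ⬝ᵥ v j = ⟪w j, (uS k : EuclideanSpace ℝ (Fin N))⟫ := by
    intro k j
    rw [hu]
    show L _ ⬝ᵥ v j = _
    rw [← hLw j, hdot, real_inner_comm]
  refine ⟨u, ?_, ?_, ?_⟩
  · intro k
    have h1 : HasSum (fun j => ⟪w j, (uS k : EuclideanSpace ℝ (Fin N))⟫ • w j)
        (T ((uS k : EuclideanSpace ℝ (Fin N)))) := by
      rw [hTapp]; exact (hsumv _).hasSum
    rw [hTu k] at h1
    have h2 := h1.mapL L.toContinuousLinearMap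
    have h3 : (fun j => (u k ⬝ᵥ v j) • v j)
        = fun j => L.toContinuousLinearMap (⟪w j, (uS k : EuclideanSpace ℝ (Fin N))⟫ • w j) := by
      funext j
      rw [hudot k j]
      simp only [ContinuousLinearEquiv.coe_coe]
      rw [_root_.map_smul, hLw j]
    rw [h3]
    have h4 : L.toContinuousLinearMap (w k) = v k := hLw k
    rw [← h4]
    exact h2
  all_goals {
    set d := finrank ℝ S with hd
    set e := stdOrthonormalBasis ℝ S with he
    set f : Fin d → EuclideanSpace ℝ (Fin N) := fun i => ((Geq.symm (e i) : S) : EuclideanSpace ℝ (Fin N)) with hf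
    have key2 : ∀ k, u k ⬝ᵥ v k = ∑ i, ⟪w k, ((e i : S) : EuclideanSpace ℝ (Fin N))⟫ * ⟪w k, f i⟫ := by
      intro k
      rw [hudot k k, real_inner_comm]
      have hrep : vS k = ∑ i, ⟪e i, vS k⟫ • e i := (e.sum_repr' (vS k)).symm
      have husum : uS k = ∑ i, ⟪e i, vS k⟫ • Geq.symm (e i) := by
        show Geq.symm (vS k) = _
        conv_lhs => rw [hrep]
        rw [map_sum]
        exact Finset.sum_congr rfl fun i _ => by rw [_root_.map_smul]
      have hucoe : (uS k : EuclideanSpace ℝ (Fin N))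
          = ∑ i, ⟪e i, vS k⟫ • f i := by
        rw [husum]
        push_cast [Submodule.coe_sum]
        rfl
      rw [hucoe, sum_inner]
      refine Finset.sum_congr rfl fun i _ => ?_
      rw [real_inner_smul_left]
      have hc : ⟪e i, vS k⟫ = ⟪((e i : S) : EuclideanSpace ℝ (Fin N)), w k⟫ :=
        Submodule.coe_inner S (e i) (vS k)
      rw [hc, real_inner_comm ((e i : S) : EuclideanSpace ℝ (Fin N)) (w k)]
      congr 1
      exact real_inner_comm _ _
    have key3 : ∀ i, ∑' k, ⟪w k, ((e i : S) : EuclideanSpace ℝ (Fin N))⟫ * ⟪w k, f i⟫ = 1 := by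
      intro i
      rw [← hTinner (((e i : S) : EuclideanSpace ℝ (Fin N))) (f i)]
      rw [hsym]
      have hTf : T (f i) = ((e i : S) : EuclideanSpace ℝ (Fin N)) := by
        rw [hf]
        show T ((Geq.symm (e i) : S) : EuclideanSpace ℝ (Fin N)) = _
        have h2 : G (Geq.symm (e i)) = e i := by rw [← hGeqapp]; exact Geq.apply_symm_apply (e i)
        have := congrArg Subtype.val h2
        rw [hGcoe] at this
        exact this
      rw [hTf, real_inner_self_eq_norm_sq]
      have : ‖((e i : S) : EuclideanSpace ℝ (Fin N))‖ = ‖(e i : S)‖ := rfl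
      rw [this, e.orthonormal.1 i]
      norm_num
    have hmsum : Summable (fun k => u k ⬝ᵥ v k) := by
      have : (fun k => u k ⬝ᵥ v k)
          = fun k => ∑ i, ⟪w k, ((e i : S) : EuclideanSpace ℝ (Fin N))⟫ * ⟪w k, f i⟫ :=
        funext key2
      rw [this]
      exact summable_sum fun i _ => hsummul _ _
    have htsum : ∑' k, u k ⬝ᵥ v k = (d : ℝ) := by
      have h1 : (fun k => u k ⬝ᵥ v k)
          = fun k => ∑ i, ⟪w k, ((e i : S) : EuclideanSpace ℝ (Fin N))⟫ * ⟪w k, f i⟫ :=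
        funext key2
      rw [h1, Summable.tsum_finsetSum fun i _ => hsummul _ _]
      rw [Finset.sum_congr rfl fun i _ => key3 i]
      simp
      exact hd.symm
    have hfr : finrank ℝ (Submodule.span ℝ (Set.range v)) = d := by
      have hmap : Submodule.map (L : EuclideanSpace ℝ (Fin N) →ₗ[ℝ] (Fin N → ℝ)) S
          = Submodule.span ℝ (Set.range v) := by
        rw [hS, Submodule.map_span]
        congr 1
        rw [← Set.range_comp]
        exact congrArg Set.range (funext fun j => hLw j)
      have := LinearEquiv.finrank_map_eq (L.toLinearEquiv) S
      rw [show ((L.toLinearEquiv : EuclideanSpace ℝ (Fin N) →ₗ[ℝ] (Fin N → ℝ))) = (L : EuclideanSpace ℝ (Fin N) →ₗ[ℝ] (Fin N → ℝ)) from rfl] at this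
      rw [hmap] at this
      exact this
    first
      | exact hmsum
      | (rw [htsum, hfr])
  }


lemma integral_sq_core {Ω : Type*} [MeasurableSpace Ω] (μ : Measure Ω) [IsProbabilityMeasure μ]
    (Z : ℤ → Ω → ℝ) (M : ℝ) (hM0 : 0 ≤ M) (hM : ∀ t ω, |Z t ω| ≤ M)
    (hZm : ∀ t, AEStronglyMeasurable (Z t) μ)
    (hmean : ∀ t : ℤ, ∫ ω, Z t ω ∂μ = 0)
    (γ0 : ℝ) (horth : ∀ s t : ℤ, (∫ ω, Z s ω * Z t ω ∂μ) = if s = t then γ0 else 0)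
    (c : ℕ → ℝ) (hc : Summable fun j => |c j|)
    (s t : ℤ) (g : Ω → ℝ) (hg : ∀ ω, HasSum (fun j : ℕ => Z (t - (j : ℤ)) ω * c j) (g ω))
    (a : ℝ) :
    ∫ ω, (Z s ω - g ω - a) ^ 2 ∂μ
      = γ0 * (1 - 2 * (if h : 0 ≤ t - s then c (t - s).toNat else 0)
          + ∑' j, (c j) ^ 2) + a ^ 2 := by
  classical
  set d : ℝ := if h : 0 ≤ t - s then c (t - s).toNat else 0 with hd
  set B : ℝ := M * ∑' j, |c j| with hB
  have htsabs : 0 ≤ ∑' j, |c j| := tsum_nonneg fun j => abs_nonneg _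
  have hB0 : 0 ≤ B := mul_nonneg hM0 htsabs
  have hbound : ∀ (f : Ω → ℝ) (b : ℝ), AEStronglyMeasurable f μ → (∀ ω, |f ω| ≤ b) →
      Integrable f μ := fun f b hf hb =>
    (integrable_const b).mono' hf (ae_of_all _ fun ω => by
      simpa [Real.norm_eq_abs] using hb ω)
  have hZi : ∀ t', Integrable (Z t') μ := fun t' => hbound _ M (hZm t') (hM t')
  have hZZi : ∀ s' t', Integrable (fun ω => Z s' ω * Z t' ω) μ := fun s' t' =>
    hbound _ (M * M) ((hZm s').mul (hZm t'))
      (fun ω => by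
        rw [abs_mul]
        exact mul_le_mul (hM s' ω) (hM t' ω) (abs_nonneg _) hM0)
  set gn : ℕ → Ω → ℝ := fun n ω => ∑ j ∈ Finset.range n, Z (t - (j : ℤ)) ω * c j with hgn
  have hgn_meas : ∀ n, AEStronglyMeasurable (gn n) μ := by
    intro n
    apply Finset.aestronglyMeasurable_fun_sum
    intro j _
    exact (hZm _).mul aestronglyMeasurable_const
  have hgn_bd : ∀ n ω, |gn n ω| ≤ B := by
    intro n ω
    calc |gn n ω| ≤ ∑ j ∈ Finset.range n, |Z (t - (j:ℤ)) ω * c j| :=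
          Finset.abs_sum_le_sum_abs _ _
      _ ≤ ∑ j ∈ Finset.range n, M * |c j| := by
          refine Finset.sum_le_sum fun j _ => ?_
          rw [abs_mul]
          exact mul_le_mul_of_nonneg_right (hM _ ω) (abs_nonneg _)
      _ = M * ∑ j ∈ Finset.range n, |c j| := by rw [Finset.mul_sum]
      _ ≤ B := mul_le_mul_of_nonneg_left
          (Summable.sum_le_tsum _ (fun j _ => abs_nonneg _) hc) hM0
  have hZc_summ : ∀ ω, Summable (fun j : ℕ => |Z (t - (j:ℤ)) ω * c j|) := by
    intro ω
    refine Summable.of_nonneg_of_le (fun j => abs_nonneg _) (fun j => ?_) (hc.mul_left M)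
    rw [abs_mul]
    exact mul_le_mul_of_nonneg_right (hM _ ω) (abs_nonneg _)
  have hg_bd : ∀ ω, |g ω| ≤ B := by
    intro ω
    have h1 : g ω = ∑' j : ℕ, Z (t - (j:ℤ)) ω * c j := (hg ω).tsum_eq.symm
    have h2 := norm_tsum_le_tsum_norm (f := fun j : ℕ => Z (t - (j:ℤ)) ω * c j)
      (hZc_summ ω)
    rw [Real.norm_eq_abs] at h2
    have h3 : (∑' j : ℕ, ‖Z (t - (j:ℤ)) ω * c j‖) ≤ ∑' j : ℕ, M * |c j| := by
      refine Summable.tsum_le_tsum (fun j => ?_) (hZc_summ ω) (hc.mul_left M)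
      rw [Real.norm_eq_abs, abs_mul]
      exact mul_le_mul_of_nonneg_right (hM _ ω) (abs_nonneg _)
    rw [h1]
    calc |∑' j : ℕ, Z (t - (j:ℤ)) ω * c j| ≤ ∑' j : ℕ, ‖Z (t - (j:ℤ)) ω * c j‖ := h2
      _ ≤ ∑' j : ℕ, M * |c j| := h3
      _ = B := by rw [hB, tsum_mul_left]
  have hg_meas : AEStronglyMeasurable g μ :=
    aestronglyMeasurable_of_tendsto_ae atTop hgn_meas
      (ae_of_all _ fun ω => (hg ω).tendsto_sum_nat)
  have hC0 : ∀ j, |c j| ≤ ∑' i, |c i| := fun j => Summable.le_tsum hc j fun i _ => abs_nonneg _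
  have hcsq : Summable (fun j => (c j) ^ 2) := by
    refine Summable.of_nonneg_of_le (fun j => sq_nonneg _) (fun j => ?_)
      (hc.mul_left (∑' i, |c i|))
    calc (c j) ^ 2 = |c j| * |c j| := by rw [sq]; exact (abs_mul_abs_self _).symm
      _ ≤ (∑' i, |c i|) * |c j| := mul_le_mul_of_nonneg_right (hC0 j) (abs_nonneg _)
  -- dominated convergence
  set Bd : ℝ := (M + B + |a|) ^ 2 with hBd
  have habs : ∀ (h : Ω → ℝ), (∀ ω, |h ω| ≤ B) → ∀ ω, |(Z s ω - h ω - a) ^ 2| ≤ Bd := by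
    intro h hb ω
    have hzs := abs_le.mp (hM s ω)
    have hh := abs_le.mp (hb ω)
    have ha := le_abs_self a
    have ha' := neg_abs_le a
    have h1 : |Z s ω - h ω - a| ≤ M + B + |a| := by
      apply abs_le.mpr; constructor <;> linarith
    calc |(Z s ω - h ω - a) ^ 2| = |Z s ω - h ω - a| ^ 2 := by
          rw [abs_of_nonneg (sq_nonneg _), sq_abs]
      _ ≤ (M + B + |a|) ^ 2 := by
          apply pow_le_pow_left₀ (abs_nonneg _) h1
  have hdct : Tendsto (fun n => ∫ ω, (Z s ω - gn n ω - a) ^ 2 ∂μ) atTop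
      (nhds (∫ ω, (Z s ω - g ω - a) ^ 2 ∂μ)) := by
    apply tendsto_integral_of_dominated_convergence (fun _ => Bd)
    · intro n
      exact (((hZm s).sub (hgn_meas n)).sub aestronglyMeasurable_const).pow 2
    · exact integrable_const Bd
    · intro n
      exact ae_of_all _ fun ω => by
        simpa [Real.norm_eq_abs] using habs (gn n) (hgn_bd n) ω
    · refine ae_of_all _ fun ω => ?_
      have h1 : Tendsto (fun n => gn n ω) atTop (nhds (g ω)) := (hg ω).tendsto_sum_nat
      have h2 : Tendsto (fun n => Z s ω - gn n ω - a) atTop (nhds (Z s ω - g ω - a)) :=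
        (tendsto_const_nhds.sub h1).sub tendsto_const_nhds
      exact h2.pow 2
  -- integrals of partial sums
  have hIgn : ∀ n, ∫ ω, gn n ω ∂μ = 0 := by
    intro n
    rw [integral_finset_sum _ (fun (j : ℕ) _ => (hZi (t - (j:ℤ))).mul_const (c j))]
    refine Finset.sum_eq_zero fun j _ => ?_
    rw [integral_mul_const, hmean, zero_mul]
  have hIxy : ∀ n, ∫ ω, Z s ω * gn n ω ∂μ
      = ∑ j ∈ Finset.range n, (if s = t - (j:ℤ) then γ0 else 0) * c j := by
    intro n
    have hrw : (fun ω => Z s ω * gn n ω)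
        = fun ω => ∑ j ∈ Finset.range n, (Z s ω * Z (t - (j:ℤ)) ω) * c j := by
      funext ω
      rw [hgn]
      simp only []
      rw [Finset.mul_sum]
      exact Finset.sum_congr rfl fun j _ => by ring
    rw [hrw, integral_finset_sum _ (fun (j : ℕ) _ => (hZZi s (t - (j:ℤ))).mul_const (c j))]
    exact Finset.sum_congr rfl fun j _ => by rw [integral_mul_const, horth]
  have hIyy : ∀ n, ∫ ω, gn n ω * gn n ω ∂μ = γ0 * ∑ j ∈ Finset.range n, c j ^ 2 := by
    intro n
    have hrw : (fun ω => gn n ω * gn n ω)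
        = fun ω => ∑ i ∈ Finset.range n, ∑ j ∈ Finset.range n,
            (Z (t - (i:ℤ)) ω * Z (t - (j:ℤ)) ω) * (c i * c j) := by
      funext ω
      rw [hgn]
      simp only []
      rw [Finset.sum_mul_sum]
      exact Finset.sum_congr rfl fun i _ => Finset.sum_congr rfl fun j _ => by ring
    rw [hrw, integral_finset_sum _ (fun i _ =>
      integrable_finset_sum _ (fun j _ => (hZZi _ _).mul_const _))]
    rw [Finset.mul_sum]
    refine Finset.sum_congr rfl fun i hi => ?_
    rw [integral_finset_sum _ (fun j _ => (hZZi _ _).mul_const _)]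
    rw [Finset.sum_eq_single i]
    · rw [integral_mul_const, horth, if_pos rfl]; ring
    · intro j _ hji
      rw [integral_mul_const, horth, if_neg, zero_mul]
      intro hcontra
      apply hji
      omega
    · intro hcontra
      exact absurd hi hcontra
  have hIxyval : ∀ n, n ≥ (t - s).toNat + 1 →
      ∑ j ∈ Finset.range n, (if s = t - (j:ℤ) then γ0 else 0) * c j = γ0 * d := by
    intro n hn
    by_cases h : 0 ≤ t - s
    · have htn := Int.toNat_of_nonneg h
      rw [hd, dif_pos h]
      rw [Finset.sum_eq_single_of_mem (t - s).toNat (Finset.mem_range.mpr (by omega))]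
      · rw [if_pos (by omega)]
      · intro j _ hji
        rw [if_neg, zero_mul]
        intro hcontra
        apply hji
        omega
    · rw [hd, dif_neg h, mul_zero]
      refine Finset.sum_eq_zero fun j _ => ?_
      rw [if_neg, zero_mul]
      intro hcontra
      omega
  -- expansion
  have hb1 : ∀ ω, |Z s ω * Z s ω| ≤ M * M := fun ω => by
    rw [abs_mul]; exact mul_le_mul (hM s ω) (hM s ω) (abs_nonneg _) hM0
  have hexpand : ∀ n, ∫ ω, (Z s ω - gn n ω - a) ^ 2 ∂μ
      = (∫ ω, Z s ω * Z s ω ∂μ) - 2 * (∫ ω, Z s ω * gn n ω ∂μ)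
        + (∫ ω, gn n ω * gn n ω ∂μ) - 2 * a * (∫ ω, Z s ω ∂μ)
        + 2 * a * (∫ ω, gn n ω ∂μ) + a ^ 2 := by
    intro n
    have hb2 : ∀ ω, |Z s ω * gn n ω| ≤ M * B := fun ω => by
      rw [abs_mul]; exact mul_le_mul (hM s ω) (hgn_bd n ω) (abs_nonneg _) hM0
    have hb3 : ∀ ω, |gn n ω * gn n ω| ≤ B * B := fun ω => by
      rw [abs_mul]; exact mul_le_mul (hgn_bd n ω) (hgn_bd n ω) (abs_nonneg _) hB0
    have Ixx : Integrable (fun ω => Z s ω * Z s ω) μ := hZZi s s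
    have Ixy : Integrable (fun ω => Z s ω * gn n ω) μ :=
      hbound _ (M * B) ((hZm s).mul (hgn_meas n)) hb2
    have Iyy : Integrable (fun ω => gn n ω * gn n ω) μ :=
      hbound _ (B * B) ((hgn_meas n).mul (hgn_meas n)) hb3
    have Ign : Integrable (gn n) μ := hbound _ B (hgn_meas n) (hgn_bd n)
    have I2xy : Integrable (fun ω => 2 * (Z s ω * gn n ω)) μ := Ixy.const_mul 2
    have I2ax : Integrable (fun ω => 2 * a * Z s ω) μ := (hZi s).const_mul (2 * a)
    have I2agn : Integrable (fun ω => 2 * a * gn n ω) μ := Ign.const_mul (2 * a)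
    have mb4 : ∀ ω, |Z s ω * Z s ω - 2 * (Z s ω * gn n ω)| ≤ M * M + 2 * (M * B) := by
      intro ω
      have e1 := abs_le.mp (hb1 ω); have e2 := abs_le.mp (hb2 ω)
      apply abs_le.mpr; constructor <;> [linarith; linarith]
    have P4 : Integrable (fun ω => Z s ω * Z s ω - 2 * (Z s ω * gn n ω)) μ :=
      hbound _ (M * M + 2 * (M * B))
        (by exact (((hZm s).mul (hZm s)).sub (((hZm s).mul (hgn_meas n)).const_mul 2))) mb4
    have mb3 : ∀ ω, |Z s ω * Z s ω - 2 * (Z s ω * gn n ω) + gn n ω * gn n ω|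
        ≤ M * M + 2 * (M * B) + B * B := by
      intro ω
      have e1 := abs_le.mp (mb4 ω); have e2 := abs_le.mp (hb3 ω)
      apply abs_le.mpr; constructor <;> [linarith; linarith]
    have P3 : Integrable (fun ω => Z s ω * Z s ω - 2 * (Z s ω * gn n ω) + gn n ω * gn n ω) μ :=
      hbound _ (M * M + 2 * (M * B) + B * B)
        (by exact ((((hZm s).mul (hZm s)).sub (((hZm s).mul (hgn_meas n)).const_mul 2)).add
          ((hgn_meas n).mul (hgn_meas n)))) mb3
    have hb4 : ∀ ω, |2 * a * Z s ω| ≤ 2 * |a| * M := by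
      intro ω
      rw [abs_mul, abs_mul, abs_two]
      exact mul_le_mul_of_nonneg_left (hM s ω) (by positivity)
    have hb5 : ∀ ω, |2 * a * gn n ω| ≤ 2 * |a| * B := by
      intro ω
      rw [abs_mul, abs_mul, abs_two]
      exact mul_le_mul_of_nonneg_left (hgn_bd n ω) (by positivity)
    have mb2 : ∀ ω, |Z s ω * Z s ω - 2 * (Z s ω * gn n ω) + gn n ω * gn n ω - 2 * a * Z s ω|
        ≤ M * M + 2 * (M * B) + B * B + 2 * |a| * M := by
      intro ω
      have e1 := abs_le.mp (mb3 ω); have e2 := abs_le.mp (hb4 ω)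
      apply abs_le.mpr; constructor <;> [linarith; linarith]
    have P2 : Integrable (fun ω => Z s ω * Z s ω - 2 * (Z s ω * gn n ω) + gn n ω * gn n ω
        - 2 * a * Z s ω) μ :=
      hbound _ (M * M + 2 * (M * B) + B * B + 2 * |a| * M)
        (by exact (((((hZm s).mul (hZm s)).sub (((hZm s).mul (hgn_meas n)).const_mul 2)).add
          ((hgn_meas n).mul (hgn_meas n))).sub ((hZm s).const_mul (2 * a)))) mb2
    have mb1 : ∀ ω, |Z s ω * Z s ω - 2 * (Z s ω * gn n ω) + gn n ω * gn n ω - 2 * a * Z s ω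
        + 2 * a * gn n ω| ≤ M * M + 2 * (M * B) + B * B + 2 * |a| * M + 2 * |a| * B := by
      intro ω
      have e1 := abs_le.mp (mb2 ω); have e2 := abs_le.mp (hb5 ω)
      apply abs_le.mpr; constructor <;> [linarith; linarith]
    have P1 : Integrable (fun ω => Z s ω * Z s ω - 2 * (Z s ω * gn n ω) + gn n ω * gn n ω
        - 2 * a * Z s ω + 2 * a * gn n ω) μ :=
      hbound _ (M * M + 2 * (M * B) + B * B + 2 * |a| * M + 2 * |a| * B)
        (by exact ((((((hZm s).mul (hZm s)).sub (((hZm s).mul (hgn_meas n)).const_mul 2)).add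
          ((hgn_meas n).mul (hgn_meas n))).sub ((hZm s).const_mul (2 * a))).add
          ((hgn_meas n).const_mul (2 * a)))) mb1
    have hrw : (fun ω => (Z s ω - gn n ω - a) ^ 2)
        = fun ω => Z s ω * Z s ω - 2 * (Z s ω * gn n ω) + gn n ω * gn n ω
            - 2 * a * Z s ω + 2 * a * gn n ω + a ^ 2 := by
      funext ω; ring
    rw [hrw]
    rw [integral_add P1 (integrable_const _)]
    rw [integral_add P2 I2agn]
    rw [integral_sub P3 I2ax]
    rw [integral_add P4 Iyy]
    rw [integral_sub Ixx I2xy]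
    rw [integral_const_mul, integral_const_mul, integral_const_mul]
    rw [integral_const]
    simp [measure_univ]
  -- limit of RHS
  have hlim2 : Tendsto (fun n => ∫ ω, (Z s ω - gn n ω - a) ^ 2 ∂μ) atTop
      (nhds (γ0 * (1 - 2 * d + ∑' j, (c j) ^ 2) + a ^ 2)) := by
    have hq := hcsq.hasSum.tendsto_sum_nat
    have h1 : Tendsto (fun n => γ0 - 2 * (γ0 * d) + γ0 * (∑ j ∈ Finset.range n, c j ^ 2)
        - 2 * a * 0 + 2 * a * 0 + a ^ 2) atTop
        (nhds (γ0 - 2 * (γ0 * d) + γ0 * (∑' j, (c j) ^ 2) - 2 * a * 0 + 2 * a * 0 + a ^ 2)) := by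
      apply Tendsto.add _ tendsto_const_nhds
      apply Tendsto.add _ tendsto_const_nhds
      apply Tendsto.sub _ tendsto_const_nhds
      exact Tendsto.add tendsto_const_nhds (hq.const_mul γ0)
    have heq : ∀ᶠ n in atTop, γ0 - 2 * (γ0 * d) + γ0 * (∑ j ∈ Finset.range n, c j ^ 2)
        - 2 * a * 0 + 2 * a * 0 + a ^ 2 = ∫ ω, (Z s ω - gn n ω - a) ^ 2 ∂μ := by
      filter_upwards [eventually_ge_atTop ((t - s).toNat + 1)] with n hn
      rw [hexpand n, hIxy n, hIxyval n hn, hIyy n, hIgn n, hmean s]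
      have := horth s s
      rw [if_pos rfl] at this
      rw [this]
    have h2 := h1.congr' heq
    have h3 : γ0 - 2 * (γ0 * d) + γ0 * (∑' j, (c j) ^ 2) - 2 * a * 0 + 2 * a * 0 + a ^ 2
        = γ0 * (1 - 2 * d + ∑' j, (c j) ^ 2) + a ^ 2 := by ring
    rw [h3] at h2
    exact h2
  exact tendsto_nhds_unique hdct hlim2


theorem stmt_19 {N : ℕ}
    (A : Matrix (Fin N) (Fin N) ℝ) (C : Fin N → ℝ)
    (hA : ∃ c : ℝ, 0 ≤ c ∧ c < 1 ∧ ∀ x : Fin N → ℝ,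
      Real.sqrt (∑ i, (A *ᵥ x) i ^ 2) ≤ c * Real.sqrt (∑ i, x i ^ 2))
    (D : Set ℝ) (hD : IsCompact D)
    {Ω : Type*} [MeasurableSpace Ω] (μ : Measure Ω) [IsProbabilityMeasure μ]
    (Z : ℤ → Ω → ℝ) (hZD : ∀ t ω, Z t ω ∈ D)
    (hZ2 : ∀ t, MemLp (Z t) 2 μ)
    -- Z is a strictly stationary white noise with variance γ0 > 0
    (hstat : ∀ τ : ℤ, Measure.map (fun ω => fun t : ℤ => Z (t + τ) ω) μ =
      Measure.map (fun ω => fun t : ℤ => Z t ω) μ)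
    (hZmean : ∀ t, expv μ (Z t) = 0)
    (hwn : ∀ s t : ℤ, s ≠ t → covv μ (Z s) (Z t) = 0)
    (γ0 : ℝ) (hvar : ∀ t, covv μ (Z t) (Z t) = γ0) (hγ0 : 0 < γ0)
    -- X = U^{A,C}(Z) is the state process: X_t = ∑_{j≥0} A^j C Z_{t-j}
    (X : ℤ → Ω → (Fin N → ℝ))
    (hX : ∀ t ω, HasSum (fun j : ℕ => Z (t - (j : ℤ)) ω • ((A ^ j) *ᵥ C)) (X t ω))
    -- ℝ^N = X ⊕ V and Ā = π_X A i_X is diagonalizable with non-zero eigenvalues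
    (V : Submodule ℝ (Fin N → ℝ)) (hcompl : IsCompl (ctrlSpan A C) V)
    (lam : Fin (Module.finrank ℝ (ctrlSpan A C)) → ℝ)
    (b : Module.Basis (Fin (Module.finrank ℝ (ctrlSpan A C))) ℝ (ctrlSpan A C))
    (heig : ∀ i, (redA A C V hcompl) (b i) = lam i • b i)
    (hnz : ∀ i, lam i ≠ 0) :
    (Summable (fun k : ℕ => memCapZ μ Z X k) ∧
      ∑' k : ℕ, memCapZ μ Z X k = ((ctrlMat A C).rank : ℝ)) ∧
    (ctrlMat A C).rank = Module.finrank ℝ (ctrlSpan A C) ∧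
    ∑' k : ℕ, foreCapZ μ Z X (k + 1) = 0 := by
  classical
  obtain ⟨cA, hc0, hc1, hAc⟩ := hA
  set v : ℕ → (Fin N → ℝ) := fun j => (A ^ j) *ᵥ C with hv
  set K : ℝ := Real.sqrt (∑ i, C i ^ 2) with hKdef
  have hK : ∀ j, Real.sqrt (∑ i, v j i ^ 2) ≤ K * cA ^ j := by
    intro j
    induction j with
    | zero => simp [hv, Matrix.one_mulVec, hKdef]
    | succ j ih =>
        have h1 : v (j+1) = A *ᵥ (v j) := by
          rw [hv]; simp only []; rw [Matrix.mulVec_mulVec, ← pow_succ']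
        rw [h1]
        calc Real.sqrt (∑ i, (A *ᵥ v j) i ^ 2)
            ≤ cA * Real.sqrt (∑ i, v j i ^ 2) := hAc _
          _ ≤ cA * (K * cA ^ j) := mul_le_mul_of_nonneg_left ih hc0
          _ = K * cA ^ (j+1) := by ring
  have hvi : ∀ j i, |v j i| ≤ K * cA ^ j := by
    intro j i
    rw [(Real.sqrt_sq_eq_abs (v j i)).symm]
    refine le_trans (Real.sqrt_le_sqrt ?_) (hK j)
    exact Finset.single_le_sum (f := fun i => v j i ^ 2) (fun i _ => sq_nonneg _)
      (Finset.mem_univ i)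
  have hgeo : Summable (fun j : ℕ => cA ^ j) := summable_geometric_of_lt_one hc0 hc1
  have hcW : ∀ W : Fin N → ℝ, Summable (fun j => |W ⬝ᵥ v j|) := by
    intro W
    refine Summable.of_nonneg_of_le (fun j => abs_nonneg _) (fun j => ?_)
      (hgeo.mul_left ((∑ i, |W i|) * K))
    calc |W ⬝ᵥ v j| ≤ ∑ i, |W i * v j i| := Finset.abs_sum_le_sum_abs _ _
      _ ≤ ∑ i, |W i| * (K * cA ^ j) := by
          refine Finset.sum_le_sum fun i _ => ?_
          rw [abs_mul]
          exact mul_le_mul_of_nonneg_left (hvi j i) (abs_nonneg _)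
      _ = ((∑ i, |W i|) * K) * cA ^ j := by rw [← Finset.sum_mul]; ring
  have hsqW : ∀ W : Fin N → ℝ, Summable (fun j => (W ⬝ᵥ v j) ^ 2) :=
    fun W => sq_summable_of_abs_summable (hcW W)
  obtain ⟨r, hr⟩ := hD.isBounded.subset_closedBall 0
  set M : ℝ := max r 0 with hMdef
  have hM0 : 0 ≤ M := le_max_right r 0
  have hMb : ∀ t ω, |Z t ω| ≤ M := by
    intro t ω
    have h1 := hr (hZD t ω)
    rw [Metric.mem_closedBall, Real.dist_eq, sub_zero] at h1
    exact le_trans h1 (le_max_left r 0)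
  have hZaesm : ∀ t, AEStronglyMeasurable (Z t) μ := fun t => (hZ2 t).aestronglyMeasurable
  have hmean' : ∀ t : ℤ, ∫ ω, Z t ω ∂μ = 0 := fun t => hZmean t
  have hcov : ∀ s t : ℤ, covv μ (Z s) (Z t) = ∫ ω, Z s ω * Z t ω ∂μ := by
    intro s t
    simp only [covv, hZmean, sub_zero]
  have horth : ∀ s t : ℤ, (∫ ω, Z s ω * Z t ω ∂μ) = if s = t then γ0 else 0 := by
    intro s t
    rw [← hcov]
    by_cases h : s = t
    · subst h; rw [if_pos rfl]; exact hvar s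
    · rw [if_neg h]; exact hwn s t h
  have hXsum : ∀ (W : Fin N → ℝ) (t : ℤ) (ω : Ω),
      HasSum (fun j : ℕ => Z (t - (j:ℤ)) ω * (W ⬝ᵥ v j)) (W ⬝ᵥ X t ω) := by
    intro W t ω
    have h := (hX t ω).mapL (dotCLM W)
    have h2 : (fun j : ℕ => dotCLM W (Z (t - (j:ℤ)) ω • ((A ^ j) *ᵥ C)))
        = fun j : ℕ => Z (t - (j:ℤ)) ω * (W ⬝ᵥ v j) := by
      funext j
      simp [dotCLM_apply, dotProduct_smul, hv]
    rw [h2] at h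
    exact h
  have hval : ∀ (s t : ℤ) (W : Fin N → ℝ) (a : ℝ),
      ∫ ω, (Z s ω - W ⬝ᵥ X t ω - a) ^ 2 ∂μ
        = γ0 * (1 - 2 * (if h : 0 ≤ t - s then W ⬝ᵥ v ((t - s).toNat) else 0)
            + ∑' j, (W ⬝ᵥ v j) ^ 2) + a ^ 2 := by
    intro s t W a
    exact integral_sq_core μ Z M hM0 hMb hZaesm hmean' γ0 horth
      (fun j => W ⬝ᵥ v j) (hcW W) s t (fun ω => W ⬝ᵥ X t ω) (hXsum W t) a
  have hbddb : ∀ (s t : ℤ), BddBelow (Set.range fun p : (Fin N → ℝ) × ℝ =>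
      ∫ ω, (Z s ω - p.1 ⬝ᵥ X t ω - p.2) ^ 2 ∂μ) := by
    intro s t
    refine ⟨0, ?_⟩
    rintro x ⟨p, rfl⟩
    exact integral_nonneg fun ω => sq_nonneg _
  obtain ⟨u, hu, hms, hts⟩ := dot_main v K cA hc0 hc1 hK
  have hsq_eq : ∀ (k : ℕ) (W : Fin N → ℝ), ∑' j, (u k ⬝ᵥ v j) * (W ⬝ᵥ v j) = W ⬝ᵥ v k := by
    intro k W
    have h := (hu k).mapL (dotCLM W)
    have h2 : (fun j : ℕ => dotCLM W ((u k ⬝ᵥ v j) • v j))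
        = fun j => (u k ⬝ᵥ v j) * (W ⬝ᵥ v j) := by
      funext j
      simp [dotCLM_apply, dotProduct_smul]
    rw [h2] at h
    exact h.tsum_eq
  have hself : ∀ k : ℕ, ∑' j, (u k ⬝ᵥ v j) ^ 2 = u k ⬝ᵥ v k := by
    intro k
    rw [← hsq_eq k (u k)]
    exact tsum_congr fun j => pow_two _
  have hinfMC : ∀ k : ℕ, (⨅ p : (Fin N → ℝ) × ℝ,
      ∫ ω, (Z (-(k:ℤ)) ω - p.1 ⬝ᵥ X 0 ω - p.2) ^ 2 ∂μ) = γ0 * (1 - u k ⬝ᵥ v k) := by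
    intro k
    have htn : ((0:ℤ) - -(k:ℤ)).toNat = k := by omega
    have hd : ∀ W : Fin N → ℝ,
        (if h : (0:ℤ) ≤ 0 - -(k:ℤ) then W ⬝ᵥ v (((0:ℤ) - -(k:ℤ)).toNat) else 0)
          = W ⬝ᵥ v k := by
      intro W
      rw [dif_pos (by omega), htn]
    apply le_antisymm
    · refine le_trans (ciInf_le (hbddb (-(k:ℤ)) 0) ((u k), (0:ℝ))) (le_of_eq ?_)
      show (∫ ω, (Z (-(k:ℤ)) ω - u k ⬝ᵥ X 0 ω - (0:ℝ)) ^ 2 ∂μ) = γ0 * (1 - u k ⬝ᵥ v k)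
      rw [hval (-(k:ℤ)) 0 (u k) 0, hd (u k), hself k]
      ring
    · refine le_ciInf fun p => ?_
      rw [hval (-(k:ℤ)) 0 p.1 p.2, hd p.1]
      have ha := hsqW p.1
      have hb := hsqW (u k)
      have hab : Summable (fun j => (u k ⬝ᵥ v j) * (p.1 ⬝ᵥ v j)) :=
        summable_mul_of_sq_summable hb ha
      have key : ∑' j, ((p.1 - u k) ⬝ᵥ v j) ^ 2
          = (∑' j, (p.1 ⬝ᵥ v j) ^ 2) - 2 * (p.1 ⬝ᵥ v k) + u k ⬝ᵥ v k := by
        have e1 : (fun j => ((p.1 - u k) ⬝ᵥ v j) ^ 2)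
            = fun j => ((p.1 ⬝ᵥ v j) ^ 2 - 2 * ((u k ⬝ᵥ v j) * (p.1 ⬝ᵥ v j)))
                + (u k ⬝ᵥ v j) ^ 2 := by
          funext j
          rw [sub_dotProduct]
          ring
        rw [e1, Summable.tsum_add (ha.sub (hab.mul_left 2)) hb,
          Summable.tsum_sub ha (hab.mul_left 2), tsum_mul_left, hsq_eq k p.1, hself k]
      have hTnn : (0:ℝ) ≤ ∑' j, ((p.1 - u k) ⬝ᵥ v j) ^ 2 :=
        tsum_nonneg fun j => sq_nonneg _
      rw [key] at hTnn
      have hfac := mul_nonneg hγ0.le hTnn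
      have hexp : γ0 * (1 - 2 * (p.1 ⬝ᵥ v k) + ∑' j, (p.1 ⬝ᵥ v j) ^ 2) + p.2 ^ 2
            - γ0 * (1 - u k ⬝ᵥ v k)
          = γ0 * ((∑' j, (p.1 ⬝ᵥ v j) ^ 2) - 2 * (p.1 ⬝ᵥ v k) + u k ⬝ᵥ v k) + p.2 ^ 2 := by
        ring
      have hsquare := sq_nonneg p.2
      linarith
  have hMCk : ∀ k : ℕ, memCapZ μ Z X k = u k ⬝ᵥ v k := by
    intro k
    unfold memCapZ
    rw [hvar 0, hinfMC k]
    field_simp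
    ring
  have hinfFC : ∀ k : ℕ, (⨅ p : (Fin N → ℝ) × ℝ,
      ∫ ω, (Z 0 ω - p.1 ⬝ᵥ X (-((k+1 : ℕ) : ℤ)) ω - p.2) ^ 2 ∂μ) = γ0 := by
    intro k
    have hneg : ¬ ((0:ℤ) ≤ -((k+1 : ℕ) : ℤ) - 0) := by
      push_cast
      omega
    apply le_antisymm
    · refine le_trans (ciInf_le (hbddb 0 (-((k+1 : ℕ) : ℤ))) ((0 : Fin N → ℝ), (0:ℝ)))
        (le_of_eq ?_)
      show (∫ ω, (Z 0 ω - (0 : Fin N → ℝ) ⬝ᵥ X (-((k+1 : ℕ) : ℤ)) ω - (0:ℝ)) ^ 2 ∂μ) = γ0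
      rw [hval 0 (-((k+1 : ℕ) : ℤ)) 0 0, dif_neg hneg]
      simp [zero_dotProduct]
    · refine le_ciInf fun p => ?_
      rw [hval 0 (-((k+1 : ℕ) : ℤ)) p.1 p.2, dif_neg hneg]
      have hQ : (0:ℝ) ≤ ∑' j, (p.1 ⬝ᵥ v j) ^ 2 := tsum_nonneg fun j => sq_nonneg _
      have hfac := mul_nonneg hγ0.le hQ
      have hsquare := sq_nonneg p.2
      nlinarith
  have hFCk : ∀ k : ℕ, foreCapZ μ Z X (k + 1) = 0 := by
    intro k
    unfold foreCapZ
    rw [hvar 0, hinfFC k]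
    field_simp
    ring
  have hrank := rank_ctrlMat A C
  have hspan : Submodule.span ℝ (Set.range v) = ctrlSpan A C := span_range_pow_eq A C
  rw [hspan] at hts
  refine ⟨⟨(summable_congr hMCk).mpr hms, ?_⟩, hrank, ?_⟩
  · rw [tsum_congr hMCk, hts, hrank]
  · rw [tsum_congr hFCk]
    exact tsum_zero
end
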